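/- arXiv:2111.15120 — 7 statements merged into one kernel-verified Lean document; each statement's English description precedes it below -/
import Mathlib

section
/- Let μ_m and μ be probability measures on a metric space S with μ_m → μ weakly, and let g_m, g : S → ℝ be uniformly bounded measurable functions such that g_m converges continuously to g (i.e., g_m(s_m) → g(s) whenever s_m → s) with g continuous. Then ∫ g_m dμ_m → ∫ g dμ. -/
open MeasureTheory Filter Topology
open scoped NNReal ENNReal

/-- Generalized dominated convergence (Serfozo/Langen): if `μ_m → μ` weakly
on a metric space `S`, the measurable functions `g_m` are uniformly bounded and converge
continuously to a continuous `g` (i.e. `g_m (s_m) → g s` whenever `s_m → s`), then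
`∫ g_m dμ_m → ∫ g dμ`. -/
theorem generalized_dominated_convergence
    {S : Type*} [MetricSpace S] [MeasurableSpace S] [BorelSpace S]
    (μ : Measure S) (μseq : ℕ → Measure S)
    [IsProbabilityMeasure μ] [∀ m, IsProbabilityMeasure (μseq m)]
    (hweak : ∀ f : BoundedContinuousFunction S ℝ,
      Tendsto (fun m => ∫ s, f s ∂(μseq m)) atTop (𝓝 (∫ s, f s ∂μ)))
    (g : S → ℝ) (gseq : ℕ → S → ℝ) (M : ℝ)
    (hg_meas : ∀ m, Measurable (gseq m)) (hg_cont : Continuous g)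
    (hbound : ∀ m s, |gseq m s| ≤ M)
    (hcc : ∀ (s : ℕ → S) (s₀ : S), Tendsto s atTop (𝓝 s₀) →
      Tendsto (fun m => gseq m (s m)) atTop (𝓝 (g s₀))) :
    Tendsto (fun m => ∫ s, gseq m s ∂(μseq m)) atTop (𝓝 (∫ s, g s ∂μ)) := by
  classical
  -- S is nonempty
  have hS : Nonempty S := by
    by_contra h
    rw [not_nonempty_iff] at h
    have h1 : μ Set.univ = 1 := measure_univ
    rw [Set.univ_eq_empty_iff.mpr h, measure_empty] at h1
    exact zero_ne_one h1
  obtain ⟨z₀⟩ := hS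
  have hM0 : 0 ≤ M := le_trans (abs_nonneg _) (hbound 0 z₀)
  -- g is bounded by M
  have hgbd : ∀ s, |g s| ≤ M := by
    intro s
    have ht := hcc (fun _ => s) s tendsto_const_nhds
    exact le_of_tendsto ((continuous_abs.tendsto _).comp ht)
      (Eventually.of_forall fun m => hbound m s)
  -- integrability
  have hint : ∀ m, Integrable (gseq m) (μseq m) := fun m =>
    (integrable_const M).mono' ((hg_meas m).aestronglyMeasurable)
      (Eventually.of_forall fun s => by simpa [Real.norm_eq_abs] using hbound m s)
  have hintg : ∀ m, Integrable g (μseq m) := fun m =>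
    (integrable_const M).mono' (hg_cont.aestronglyMeasurable)
      (Eventually.of_forall fun s => by simpa [Real.norm_eq_abs] using hgbd s)
  -- second part: ∫ g dμ_m → ∫ g dμ by weak convergence
  have h2 : Tendsto (fun m => ∫ s, g s ∂(μseq m)) atTop (𝓝 (∫ s, g s ∂μ)) := by
    have := hweak (BoundedContinuousFunction.ofNormedAddCommGroup g hg_cont M
      (fun s => by simpa [Real.norm_eq_abs] using hgbd s))
    simpa using this
  -- weak convergence in the sense of ProbabilityMeasure
  set ν : ProbabilityMeasure S := ⟨μ, inferInstance⟩ with hνdef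
  set νs : ℕ → ProbabilityMeasure S := fun m => ⟨μseq m, inferInstance⟩ with hνsdef
  have hν : Tendsto νs atTop (𝓝 ν) := by
    rw [ProbabilityMeasure.tendsto_iff_forall_integral_tendsto]
    intro f
    exact hweak f
  -- first part: ∫ (g_m - g) dμ_m → 0
  have h1 : Tendsto (fun m => ∫ s, (gseq m s - g s) ∂(μseq m)) atTop (𝓝 0) := by
    rw [NormedAddCommGroup.tendsto_nhds_zero]
    intro ε hε
    set ε₀ : ℝ := ε / 4 with hε₀def
    have hε₀ : 0 < ε₀ := by positivity
    set δr : ℝ := ε / (8 * (M + 1)) with hδrdef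
    have hδr : 0 < δr := by positivity
    -- the closed sets G k
    set E : ℕ → Set S := fun k => {t | ∃ m, k ≤ m ∧ ε₀ ≤ |gseq m t - g t|} with hEdef
    set G : ℕ → Set S := fun k => closure (E k) with hGdef
    have hGclosed : ∀ k, IsClosed (G k) := fun k => isClosed_closure
    have hGanti : Antitone G := by
      intro k l hkl
      apply closure_mono
      rintro t ⟨m, hml, hmt⟩
      exact ⟨m, le_trans hkl hml, hmt⟩
    -- the intersection of the G k is empty
    have hGempty : ⋂ k, G k = ∅ := by
      rw [Set.eq_empty_iff_forall_notMem]
      intro s hs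
      simp only [Set.mem_iInter] at hs
      have hchoice : ∀ k : ℕ, ∃ t, (∃ m, k ≤ m ∧ ε₀ ≤ |gseq m t - g t|) ∧
          dist t s < 1 / (k + 1) := by
        intro k
        have hsk := hs k
        rw [hGdef] at hsk
        rw [Metric.mem_closure_iff] at hsk
        obtain ⟨t, htE, htd⟩ := hsk (1 / (k + 1)) (by positivity)
        exact ⟨t, htE, by rwa [dist_comm]⟩
      choose t ht hd using hchoice
      choose mm hmmge hmmabs using ht
      -- build a strictly increasing sequence of indices
      obtain ⟨φ, hφ0, hφsucc⟩ : ∃ φ : ℕ → ℕ, φ 0 = 0 ∧ ∀ j, φ (j + 1) = mm (φ j) + 1 :=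
        ⟨fun j => Nat.rec 0 (fun _ p => mm p + 1) j, rfl, fun j => rfl⟩
      have hφge : ∀ j, j ≤ φ j := by
        intro j
        induction j with
        | zero => exact Nat.zero_le _
        | succ j ih =>
          rw [hφsucc]
          exact Nat.succ_le_succ (le_trans ih (hmmge (φ j)))
      set n : ℕ → ℕ := fun j => mm (φ j) with hndef
      have hnmono : StrictMono n := by
        apply strictMono_nat_of_lt_succ
        intro j
        have h1' : n j < φ (j + 1) := by rw [hφsucc]; exact Nat.lt_succ_self _
        exact lt_of_lt_of_le h1' (hmmge (φ (j + 1)))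
      -- the diagonal sequence
      set s' : ℕ → S := fun i => if h : ∃ j, n j = i then t (φ h.choose) else s with hs'def
      have hs'n : ∀ j, s' (n j) = t (φ j) := by
        intro j
        have hex : ∃ j', n j' = n j := ⟨j, rfl⟩
        rw [hs'def]
        simp only [dif_pos hex]
        exact congrArg (fun j' => t (φ j')) (hnmono.injective hex.choose_spec)
      -- s' tends to s
      have hs'tend : Tendsto s' atTop (𝓝 s) := by
        rw [Metric.tendsto_atTop]
        intro δ hδ
        obtain ⟨J, hJ⟩ := exists_nat_one_div_lt hδ
        refine ⟨n J, fun i hi => ?_⟩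
        rw [hs'def]
        by_cases hex : ∃ j, n j = i
        · simp only [dif_pos hex]
          set j := hex.choose with hjdef
          have hji : n j = i := hex.choose_spec
          have hJj : J ≤ j := by
            rw [← hnmono.le_iff_le]
            omega
          have hdist := hd (φ j)
          have hmono1 : (1 : ℝ) / ((φ j : ℝ) + 1) ≤ 1 / ((j : ℝ) + 1) := by
            apply one_div_le_one_div_of_le (by positivity)
            have h' := (Nat.cast_le (α := ℝ)).mpr (hφge j)
            push_cast at h' ⊢
            linarith
          have hmono2 : (1 : ℝ) / ((j : ℝ) + 1) ≤ 1 / ((J : ℝ) + 1) := by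
            apply one_div_le_one_div_of_le (by positivity)
            have h' := (Nat.cast_le (α := ℝ)).mpr hJj
            push_cast at h' ⊢
            linarith
          calc dist (t (φ j)) s < 1 / ((φ j : ℝ) + 1) := hdist
            _ ≤ 1 / ((j : ℝ) + 1) := hmono1
            _ ≤ 1 / ((J : ℝ) + 1) := hmono2
            _ < δ := hJ
        · simp only [dif_neg hex]
          rwa [dist_self]
      -- t ∘ φ tends to s
      have httend : Tendsto (fun j => t (φ j)) atTop (𝓝 s) := by
        rw [tendsto_iff_dist_tendsto_zero]
        apply squeeze_zero (fun j => dist_nonneg)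
          (g := fun j : ℕ => 1 / (j + 1))
        · intro j
          have hdist := hd (φ j)
          have hmono1 : (1 : ℝ) / ((φ j : ℝ) + 1) ≤ 1 / ((j : ℝ) + 1) := by
            apply one_div_le_one_div_of_le (by positivity)
            have h' := (Nat.cast_le (α := ℝ)).mpr (hφge j)
            push_cast at h' ⊢
            linarith
          linarith
        · exact tendsto_one_div_add_atTop_nhds_zero_nat
      -- derive contradiction
      have hsub : Tendsto (fun j => gseq (n j) (s' (n j))) atTop (𝓝 (g s)) :=
        (hcc s' s hs'tend).comp hnmono.tendsto_atTop
      have hgt : Tendsto (fun j => g (t (φ j))) atTop (𝓝 (g s)) :=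
        (hg_cont.tendsto s).comp httend
      have hdiff : Tendsto (fun j => gseq (n j) (t (φ j)) - g (t (φ j))) atTop (𝓝 0) := by
        have h' := hsub.sub hgt
        rw [sub_self] at h'
        refine h'.congr fun j => ?_
        rw [hs'n j]
      have habs : Tendsto (fun j => |gseq (n j) (t (φ j)) - g (t (φ j))|) atTop (𝓝 0) := by
        have := hdiff.abs
        simpa using this
      have hcontra : ε₀ ≤ 0 :=
        ge_of_tendsto habs (Eventually.of_forall fun j => hmmabs (φ j))
      linarith
    -- μ (G k) → 0
    have hGtend : Tendsto (fun k => μ (G k)) atTop (𝓝 0) := by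
      have := tendsto_measure_iInter_atTop
        (μ := μ) (s := G)
        (fun k => ((hGclosed k).measurableSet).nullMeasurableSet) hGanti
        ⟨0, measure_ne_top μ _⟩
      rw [hGempty, measure_empty] at this
      exact this
    -- choose k with μ (G k) small
    have hδ0 : (0 : ℝ≥0∞) < ENNReal.ofReal δr := ENNReal.ofReal_pos.mpr hδr
    obtain ⟨k, hk⟩ : ∃ k, μ (G k) < ENNReal.ofReal δr :=
      (hGtend.eventually_lt_const hδ0).exists
    -- portmanteau: eventually μseq m (G k) < δ
    have hlim : limsup (fun m => (νs m : Measure S) (G k)) atTop ≤ (ν : Measure S) (G k) :=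
      ProbabilityMeasure.limsup_measure_closed_le_of_tendsto hν (hGclosed k)
    have hlim' : limsup (fun m => (μseq m) (G k)) atTop < ENNReal.ofReal δr :=
      lt_of_le_of_lt hlim hk
    have hev : ∀ᶠ m in atTop, (μseq m) (G k) < ENNReal.ofReal δr :=
      eventually_lt_of_limsup_lt hlim'
    -- conclude
    filter_upwards [eventually_ge_atTop k, hev] with m hm1 hm2
    have hintf : Integrable (fun s => gseq m s - g s) (μseq m) := (hint m).sub (hintg m)
    have hGm : MeasurableSet (G k) := (hGclosed k).measurableSet
    have hsplit : ∫ s, (gseq m s - g s) ∂(μseq m)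
        = (∫ s in (G k), (gseq m s - g s) ∂(μseq m))
          + ∫ s in (G k)ᶜ, (gseq m s - g s) ∂(μseq m) := by
      rw [integral_add_compl hGm hintf]
    have b1 : ‖∫ s in (G k), (gseq m s - g s) ∂(μseq m)‖
        ≤ (2 * M) * ((μseq m) (G k)).toReal := by
      apply norm_setIntegral_le_of_norm_le_const (measure_lt_top _ _)
      · intro x _
        rw [Real.norm_eq_abs]
        calc |gseq m x - g x| ≤ |gseq m x| + |g x| := abs_sub _ _
          _ ≤ M + M := add_le_add (hbound m x) (hgbd x)
          _ = 2 * M := by ring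
    have b2 : ‖∫ s in (G k)ᶜ, (gseq m s - g s) ∂(μseq m)‖
        ≤ ε₀ * ((μseq m) (G k)ᶜ).toReal := by
      apply norm_setIntegral_le_of_norm_le_const (measure_lt_top _ _)
      · intro x hx
        rw [Real.norm_eq_abs]
        by_contra hcon
        push_neg at hcon
        apply hx
        apply subset_closure
        exact ⟨m, hm1, le_of_lt hcon⟩
    have hμGk : ((μseq m) (G k)).toReal < δr := by
      rw [← ENNReal.lt_ofReal_iff_toReal_lt (measure_ne_top _ _)]
      exact hm2
    have hμGkc : ((μseq m) (G k)ᶜ).toReal ≤ 1 := by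
      have h1' : (μseq m) (G k)ᶜ ≤ 1 := prob_le_one
      calc ((μseq m) (G k)ᶜ).toReal ≤ (1 : ℝ≥0∞).toReal :=
            ENNReal.toReal_mono (by simp) h1'
        _ = 1 := by simp
    calc ‖∫ s, (gseq m s - g s) ∂(μseq m)‖
        ≤ ‖∫ s in (G k), (gseq m s - g s) ∂(μseq m)‖
          + ‖∫ s in (G k)ᶜ, (gseq m s - g s) ∂(μseq m)‖ := by
          rw [hsplit]; exact norm_add_le _ _
      _ ≤ (2 * M) * ((μseq m) (G k)).toReal + ε₀ * ((μseq m) (G k)ᶜ).toReal :=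
          add_le_add b1 b2
      _ ≤ (2 * M) * δr + ε₀ * 1 :=
          add_le_add (mul_le_mul_of_nonneg_left (le_of_lt hμGk) (by positivity))
            (mul_le_mul_of_nonneg_left hμGkc (le_of_lt hε₀))
      _ < ε := by
          have heq : δr * (8 * (M + 1)) = ε := by
            rw [hδrdef]; field_simp
          rw [mul_one, hε₀def]
          nlinarith [heq, hδr, hM0, hε]
  -- combine
  have hfinal := h1.add h2
  rw [zero_add] at hfinal
  refine hfinal.congr fun m => ?_
  rw [integral_sub (hint m) (hintg m)]
  ring
end

section
/- Let p be a stochastic kernel from a metric space W to a Polish space Y that is weakly continuous (w_m → w implies p(·|w_m) → p(·|w) weakly), and let G_m : Y × W → ℝ be a uniformly bounded sequence converging continuously to a continuous bounded G : Y × W → ℝ. Then the functions H_m(w) := ∫ G_m(y, w) p(dy|w) are uniformly bounded and converge continuously to H(w) := ∫ G(y, w) p(dy|w). -/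
open MeasureTheory ProbabilityTheory Filter Topology
open scoped NNReal ENNReal

/-- Continuous convergence passes to subsequences with arbitrary approximating points. -/
lemma cc_subseq {Y : Type*} [MetricSpace Y]
    (F : ℕ → Y → ℝ) (L : ℝ) (y : Y)
    (hcc : ∀ (yseq : ℕ → Y), Tendsto yseq atTop (𝓝 y) →
      Tendsto (fun m => F m (yseq m)) atTop (𝓝 L))
    (φ : ℕ → ℕ) (hφ : StrictMono φ) (ysub : ℕ → Y)
    (hy : Tendsto ysub atTop (𝓝 y)) :
    Tendsto (fun k => F (φ k) (ysub k)) atTop (𝓝 L) := by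
  classical
  set yfull : ℕ → Y := fun m => if h : ∃ k, φ k = m then ysub h.choose else y with hyfull
  have hinj : Function.Injective φ := hφ.injective
  have hfull_eq : ∀ k, yfull (φ k) = ysub k := by
    intro k
    have h : ∃ j, φ j = φ k := ⟨k, rfl⟩
    simp only [hyfull, dif_pos h]
    exact congrArg ysub (hinj h.choose_spec)
  have hyt : Tendsto yfull atTop (𝓝 y) := by
    rw [Metric.tendsto_atTop] at hy ⊢
    intro ε hε
    obtain ⟨K, hK⟩ := hy ε hε
    refine ⟨φ K, fun m hm => ?_⟩
    by_cases h : ∃ k, φ k = m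
    · have : K ≤ h.choose := by
        have := h.choose_spec
        exact hφ.le_iff_le.mp (by omega)
      simp only [hyfull, dif_pos h]
      exact hK _ this
    · simp only [hyfull, dif_neg h]
      simpa using hε
  have := (hcc yfull hyt).comp (hφ.tendsto_atTop)
  refine this.congr fun k => ?_
  simp only [Function.comp_apply, hfull_eq]

/-- Pointwise local uniformity from continuous convergence. -/
lemma cc_pointwise {Y : Type*} [MetricSpace Y]
    (F : ℕ → Y → ℝ) (L : ℝ) (y : Y)
    (hcc : ∀ (yseq : ℕ → Y), Tendsto yseq atTop (𝓝 y) →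
      Tendsto (fun m => F m (yseq m)) atTop (𝓝 L))
    {ε : ℝ} (hε : 0 < ε) :
    ∃ δ > 0, ∃ N : ℕ, ∀ m ≥ N, ∀ y', dist y' y < δ → |F m y' - L| < ε := by
  by_contra hcon
  push_neg at hcon
  have hfreq : ∀ k : ℕ, ∃ᶠ m in atTop,
      ∃ y', dist y' y < 1 / (k + 1) ∧ ε ≤ |F m y' - L| := by
    intro k
    rw [frequently_atTop]
    intro N
    obtain ⟨m, hmN, y', hd, hb⟩ := hcon (1 / (k + 1)) (by positivity) N
    exact ⟨m, hmN, y', hd, hb⟩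
  obtain ⟨φ, hφ, hP⟩ := Filter.extraction_forall_of_frequently hfreq
  choose ysub hd hb using hP
  have hy : Tendsto ysub atTop (𝓝 y) := by
    rw [tendsto_iff_dist_tendsto_zero]
    apply squeeze_zero (fun k => dist_nonneg) (fun k => (hd k).le)
    exact tendsto_one_div_add_atTop_nhds_zero_nat
  have hlim := cc_subseq F L y hcc φ hφ ysub hy
  have : ∀ᶠ k in atTop, |F (φ k) (ysub k) - L| < ε := by
    have := Metric.tendsto_atTop.mp hlim
    obtain ⟨K, hK⟩ := this ε hε
    exact eventually_atTop.mpr ⟨K, fun k hk => by simpa [Real.dist_eq] using hK k hk⟩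
  obtain ⟨k, hk⟩ := this.exists
  exact absurd (hb k) (not_le.mpr hk)

open MeasureTheory ProbabilityTheory
open scoped NNReal ENNReal


/-- Integrating a uniformly bounded, continuously convergent sequence `G_m`
against a weakly continuous stochastic kernel `p` produces a uniformly bounded, continuously
convergent sequence `H_m (w) := ∫ G_m (y, w) p(dy|w)`. -/
theorem kernel_preserves_continuous_convergence
    {W : Type*} [MetricSpace W] [MeasurableSpace W] [BorelSpace W]
    {Y : Type*} [MetricSpace Y] [PolishSpace Y] [MeasurableSpace Y] [BorelSpace Y]
    (p : Kernel W Y) [IsMarkovKernel p]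
    (hp_weak : ∀ (wseq : ℕ → W) (w : W), Tendsto wseq atTop (𝓝 w) →
      ∀ f : BoundedContinuousFunction Y ℝ,
        Tendsto (fun m => ∫ y, f y ∂(p (wseq m))) atTop (𝓝 (∫ y, f y ∂(p w))))
    (G : Y × W → ℝ) (Gseq : ℕ → Y × W → ℝ) (M : ℝ)
    (hG_meas : ∀ m, Measurable (Gseq m))
    (hG_bdd : ∀ m q, |Gseq m q| ≤ M)
    (hG_cont : Continuous G) (hG_cbdd : ∀ q, |G q| ≤ M)
    (hcc : ∀ (yseq : ℕ → Y) (wseq : ℕ → W) (y : Y) (w : W),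
      Tendsto yseq atTop (𝓝 y) → Tendsto wseq atTop (𝓝 w) →
      Tendsto (fun m => Gseq m (yseq m, wseq m)) atTop (𝓝 (G (y, w)))) :
    (∀ (m : ℕ) (w : W), |∫ y, Gseq m (y, w) ∂(p w)| ≤ M) ∧
    (∀ (wseq : ℕ → W) (w : W), Tendsto wseq atTop (𝓝 w) →
      Tendsto (fun m => ∫ y, Gseq m (y, wseq m) ∂(p (wseq m))) atTop
        (𝓝 (∫ y, G (y, w) ∂(p w)))) := by
  constructor
  · intro m w
    have : IsProbabilityMeasure (p w) := inferInstance
    have h := norm_integral_le_of_norm_le_const (μ := p w)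
      (f := fun y => Gseq m (y, w)) (C := M)
      (ae_of_all _ fun y => by simpa [Real.norm_eq_abs] using hG_bdd m (y, w))
    simpa [Real.norm_eq_abs, measure_univ] using h
  intro wseq w hw
  -- Setup
  have hPμ : IsProbabilityMeasure (p w) := inferInstance
  have hY : Nonempty Y := by
    by_contra h
    have h1 : (p w) Set.univ = 1 := measure_univ
    rw [Set.univ_eq_empty_iff.mpr (not_nonempty_iff.mp h)] at h1
    simp at h1
  have hM0 : 0 ≤ M := le_trans (abs_nonneg _) (hG_cbdd (Classical.arbitrary Y, w))
  set f : Y → ℝ := fun y => G (y, w) with hfdef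
  set fm : ℕ → Y → ℝ := fun m y => Gseq m (y, wseq m) with hfmdef
  have hf_cont : Continuous f := hG_cont.comp (continuous_id.prodMk continuous_const)
  have hfm_meas : ∀ m, Measurable (fm m) :=
    fun m => (hG_meas m).comp (measurable_id.prodMk measurable_const)
  have hfm_int : ∀ m, Integrable (fm m) (p (wseq m)) := fun m =>
    (integrable_const M).mono' (hfm_meas m).aestronglyMeasurable
      (ae_of_all _ fun y => by simpa [Real.norm_eq_abs] using hG_bdd m (y, wseq m))
  have hf_int : ∀ (κ : Measure Y) [IsProbabilityMeasure κ], Integrable f κ := fun κ _ =>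
    (integrable_const M).mono' hf_cont.aestronglyMeasurable
      (ae_of_all _ fun y => by simpa [Real.norm_eq_abs] using hG_cbdd (y, w))
  -- Weak convergence of the measures as probability measures
  set ν : ProbabilityMeasure Y := ⟨p w, inferInstance⟩ with hνdef
  set νs : ℕ → ProbabilityMeasure Y := fun m => ⟨p (wseq m), inferInstance⟩ with hνsdef
  have hνt : Tendsto νs atTop (𝓝 ν) := by
    apply ProbabilityMeasure.tendsto_iff_forall_integral_tendsto.mpr
    intro g
    exact hp_weak wseq w hw g
  rw [Metric.tendsto_nhds]
  intro ε hε
  set ε' : ℝ := min (ε / (4 + 2 * M)) 2⁻¹ with hε'def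
  have hε'pos : 0 < ε' := lt_min (by positivity) (by norm_num)
  have hε'le : ε' ≤ ε / (4 + 2 * M) := min_le_left _ _
  -- pointwise local uniformity
  have key : ∀ y : Y, ∃ δ > 0, ∃ N : ℕ, ∀ m ≥ N, ∀ y',
      dist y' y < δ → |fm m y' - f y'| < 2 * ε' := by
    intro y
    obtain ⟨δ₁, hδ₁, N, hN⟩ := cc_pointwise (fun m y' => Gseq m (y', wseq m)) (G (y, w)) y
      (fun yseq hyseq => hcc yseq wseq y w hyseq hw) hε'pos
    obtain ⟨δ₂, hδ₂, hfc⟩ := Metric.continuousAt_iff.mp hf_cont.continuousAt (ε := ε') hε'pos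
    refine ⟨min δ₁ δ₂, lt_min hδ₁ hδ₂, N, fun m hm y' hy' => ?_⟩
    have h1 : |Gseq m (y', wseq m) - G (y, w)| < ε' :=
      hN m hm y' (lt_of_lt_of_le hy' (min_le_left _ _))
    have h2 : |f y' - f y| < ε' := by
      have := hfc (lt_of_lt_of_le hy' (min_le_right _ _))
      rwa [Real.dist_eq] at this
    have : fm m y' - f y' = (Gseq m (y', wseq m) - G (y, w)) - (f y' - f y) := by
      simp only [hfmdef, hfdef]
      ring
    rw [this]
    calc |(Gseq m (y', wseq m) - G (y, w)) - (f y' - f y)|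
        ≤ |Gseq m (y', wseq m) - G (y, w)| + |f y' - f y| := abs_sub _ _
      _ < ε' + ε' := add_lt_add h1 h2
      _ = 2 * ε' := by ring
  choose δ hδ N hN using key
  -- Lindelöf: countable subcover
  have hcover : (⋃ y, Metric.ball y (δ y)) = Set.univ :=
    Set.eq_univ_of_forall fun y => Set.mem_iUnion.mpr ⟨y, Metric.mem_ball_self (hδ y)⟩
  obtain ⟨T, hTc, hTU⟩ := TopologicalSpace.isOpen_iUnion_countable
    (fun y => Metric.ball y (δ y)) (fun y => Metric.isOpen_ball)
  have hTne : T.Nonempty := by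
    rcases Set.eq_empty_or_nonempty T with h | h
    · exfalso
      rw [h] at hTU
      simp [hcover] at hTU
      exact (Set.univ_eq_empty_iff.mp hTU.symm).elim (Classical.arbitrary Y)
    · exact h
  obtain ⟨e, he⟩ := hTc.exists_eq_range hTne
  set s : ℕ → Set Y := fun k => Metric.ball (e k) (δ (e k)) with hsdef
  have hsU : (⋃ k, s k) = Set.univ := by
    rw [← hcover, ← hTU, he]
    rw [Set.biUnion_range]
  have htend : Tendsto (fun n => (p w) (Set.accumulate s n)) atTop (𝓝 1) := by
    have := tendsto_measure_iUnion_accumulate (μ := p w) (f := s)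
    rwa [hsU, measure_univ] at this
  have hlt1 : (1 : ℝ≥0∞) - ENNReal.ofReal ε' < 1 :=
    ENNReal.sub_lt_self ENNReal.one_ne_top one_ne_zero
      (by simpa [ENNReal.ofReal_eq_zero, not_le] using hε'pos)
  obtain ⟨n₀, hn₀⟩ := (htend.eventually_const_lt hlt1).exists
  set U : Set Y := Set.accumulate s n₀ with hUdef
  have hUopen : IsOpen U := by
    rw [hUdef, Set.accumulate_def]
    exact isOpen_biUnion fun k _ => Metric.isOpen_ball
  have hUmeas : MeasurableSet U := hUopen.measurableSet
  have hμUc : (p w) Uᶜ < ENNReal.ofReal ε' := by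
    rw [prob_compl_eq_one_sub hUmeas]
    rw [ENNReal.sub_lt_iff_lt_right (measure_ne_top _ _) prob_le_one]
    exact ENNReal.lt_add_of_sub_lt_left (Or.inl ENNReal.one_ne_top) hn₀
  set N₀ : ℕ := (Finset.range (n₀ + 1)).sup (fun k => N (e k)) with hN₀def
  have hU_unif : ∀ m ≥ N₀, ∀ y' ∈ U, |fm m y' - f y'| < 2 * ε' := by
    intro m hm y' hy'
    rw [hUdef, Set.accumulate_def, Set.mem_iUnion₂] at hy'
    obtain ⟨k, hk, hyk⟩ := hy'
    refine hN (e k) m ?_ y' (Metric.mem_ball.mp hyk)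
    have hkmem : k ∈ Finset.range (n₀ + 1) := Finset.mem_range.mpr (Nat.lt_succ_of_le hk)
    have hle : N (e k) ≤ N₀ := Finset.le_sup (f := fun k => N (e k)) hkmem
    exact le_trans hle hm
  -- portmanteau
  have hportm : (atTop.limsup fun m => ((νs m : Measure Y) Uᶜ)) ≤ (ν : Measure Y) Uᶜ :=
    ProbabilityMeasure.limsup_measure_closed_le_of_tendsto hνt (isClosed_compl_iff.mpr hUopen)
  have hevent : ∀ᶠ m in atTop, (p (wseq m)) Uᶜ < ENNReal.ofReal ε' :=
    eventually_lt_of_limsup_lt (lt_of_le_of_lt hportm hμUc)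
  -- weak convergence term for f
  set fb : BoundedContinuousFunction Y ℝ :=
    BoundedContinuousFunction.ofNormedAddCommGroup f hf_cont M
      (fun y => by simpa [Real.norm_eq_abs] using hG_cbdd (y, w)) with hfbdef
  have hfb_eq : ∀ y, fb y = f y := fun y => rfl
  have hweak := hp_weak wseq w hw fb
  have hweak' : ∀ᶠ m in atTop,
      |∫ y, f y ∂(p (wseq m)) - ∫ y, f y ∂(p w)| < ε' := by
    have := Metric.tendsto_nhds.mp hweak ε' hε'pos
    filter_upwards [this] with m hm
    simpa [Real.dist_eq, hfb_eq] using hm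
  filter_upwards [hevent, hweak', eventually_ge_atTop N₀] with m h1 h2 h3
  rw [Real.dist_eq]
  -- main estimate
  have hμmU : IsProbabilityMeasure (p (wseq m)) := inferInstance
  have hsub_int : Integrable (fun y => fm m y - f y) (p (wseq m)) :=
    (hfm_int m).sub (hf_int (p (wseq m)))
  have hsplit : ∫ y, (fm m y - f y) ∂(p (wseq m)) =
      (∫ y in U, (fm m y - f y) ∂(p (wseq m))) +
      (∫ y in Uᶜ, (fm m y - f y) ∂(p (wseq m))) :=
    (integral_add_compl hUmeas hsub_int).symm
  have hbound1 : ‖∫ y in U, (fm m y - f y) ∂(p (wseq m))‖ ≤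
      (2 * ε') * ((p (wseq m)) U).toReal := by
    apply norm_setIntegral_le_of_norm_le_const (measure_lt_top _ _)
    intro y hy
    simpa [Real.norm_eq_abs] using (hU_unif m h3 y hy).le
  have hbound2 : ‖∫ y in Uᶜ, (fm m y - f y) ∂(p (wseq m))‖ ≤
      (2 * M) * ((p (wseq m)) Uᶜ).toReal := by
    apply norm_setIntegral_le_of_norm_le_const (measure_lt_top _ _)
    intro y _
    rw [Real.norm_eq_abs]
    calc |fm m y - f y| ≤ |fm m y| + |f y| := abs_sub _ _
      _ ≤ M + M := add_le_add (hG_bdd m (y, wseq m)) (hG_cbdd (y, w))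
      _ = 2 * M := by ring
  have hμmU1 : ((p (wseq m)) U).toReal ≤ 1 := by
    have := prob_le_one (μ := p (wseq m)) (s := U)
    simpa using ENNReal.toReal_mono ENNReal.one_ne_top this
  have hμmUc : ((p (wseq m)) Uᶜ).toReal ≤ ε' :=
    ENNReal.toReal_le_of_le_ofReal hε'pos.le h1.le
  have hterm1 : |∫ y, fm m y ∂(p (wseq m)) - ∫ y, f y ∂(p (wseq m))| ≤
      2 * ε' + 2 * M * ε' := by
    rw [← integral_sub (hfm_int m) (hf_int (p (wseq m)))]
    rw [← Real.norm_eq_abs, hsplit]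
    calc ‖(∫ y in U, (fm m y - f y) ∂(p (wseq m))) +
          (∫ y in Uᶜ, (fm m y - f y) ∂(p (wseq m)))‖
        ≤ ‖∫ y in U, (fm m y - f y) ∂(p (wseq m))‖ +
          ‖∫ y in Uᶜ, (fm m y - f y) ∂(p (wseq m))‖ := norm_add_le _ _
      _ ≤ (2 * ε') * ((p (wseq m)) U).toReal + (2 * M) * ((p (wseq m)) Uᶜ).toReal :=
          add_le_add hbound1 hbound2
      _ ≤ 2 * ε' + 2 * M * ε' := by
          have h2ε' : (0:ℝ) ≤ 2 * ε' := by positivity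
          have h2M : (0:ℝ) ≤ 2 * M := by positivity
          have t1 : (2 * ε') * ((p (wseq m)) U).toReal ≤ 2 * ε' := by
            nlinarith [ENNReal.toReal_nonneg (a := (p (wseq m)) U)]
          have t2 : (2 * M) * ((p (wseq m)) Uᶜ).toReal ≤ 2 * M * ε' := by
            nlinarith [ENNReal.toReal_nonneg (a := (p (wseq m)) Uᶜ)]
          linarith
  calc |∫ y, fm m y ∂(p (wseq m)) - ∫ y, f y ∂(p w)|
      ≤ |∫ y, fm m y ∂(p (wseq m)) - ∫ y, f y ∂(p (wseq m))| +
        |∫ y, f y ∂(p (wseq m)) - ∫ y, f y ∂(p w)| := abs_sub_le _ _ _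
    _ < (2 * ε' + 2 * M * ε') + ε' := by exact add_lt_add_of_le_of_lt hterm1 h2
    _ ≤ ε := by
        have h4 : (0:ℝ) < 4 + 2 * M := by linarith
        have hh : ε' * (4 + 2 * M) ≤ ε := (le_div_iff₀ h4).mp hε'le
        nlinarith
end

section
/- Let X be a metric space, A ⊆ X closed, L a locally convex topological vector space, and f : A → L continuous. Then there exists a continuous f_C : X → L with f_C = f on A and f_C(X) contained in the convex hull of f(A). -/
open Filter Topology

/-- Dugundji's extension theorem: a continuous map `f` from a (nonempty)
closed subset `A` of a metric space `X` into a locally convex topological vector space `L`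
extends to a continuous map `f_C : X → L` whose image lies in the convex hull of `f(A)`. -/
theorem dugundji_extension
    {X : Type*} [MetricSpace X]
    {L : Type*} [AddCommGroup L] [Module ℝ L] [TopologicalSpace L]
    [IsTopologicalAddGroup L] [ContinuousSMul ℝ L] [LocallyConvexSpace ℝ L]
    (A : Set X) (hA_closed : IsClosed A) (hA_ne : A.Nonempty)
    (f : X → L) (hf : ContinuousOn f A) :
    ∃ fC : X → L, Continuous fC ∧ (∀ a ∈ A, fC a = f a) ∧
      ∀ x, fC x ∈ convexHull ℝ (f '' A) := by
  classical
  set B : Set X := Aᶜ with hB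
  have hr : ∀ c : B, 0 < Metric.infDist (c : X) A := fun c =>
    (hA_closed.notMem_iff_infDist_pos hA_ne).mp c.2
  -- the cover of the open set `B` by balls of radius `infDist c A / 2`
  let U : B → Set B := fun c =>
    Subtype.val ⁻¹' Metric.ball (c : X) (Metric.infDist (c : X) A / 2)
  have hUo : ∀ c, IsOpen (U c) := fun c =>
    Metric.isOpen_ball.preimage continuous_subtype_val
  have hUc : (Set.univ : Set B) ⊆ ⋃ c, U c := fun y _ =>
    Set.mem_iUnion.2 ⟨y, by
      simp only [U, Set.mem_preimage, Metric.mem_ball, dist_self]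
      linarith [hr y]⟩
  obtain ⟨ρ, hρ⟩ := PartitionOfUnity.exists_isSubordinate isClosed_univ U hUo hUc
  -- choose nearby points in `A`
  have ha : ∀ c : B, ∃ p ∈ A, dist (c : X) p < 2 * Metric.infDist (c : X) A := fun c => by
    rw [← Metric.infDist_lt_iff hA_ne]
    linarith [hr c]
  choose a haA haD using ha
  let g : B → L := fun y => ∑ᶠ i, ρ i y • f (a i)
  have hg_cont : Continuous g :=
    hρ.continuous_finsum_smul hUo fun i => continuousOn_const
  -- key metric estimate
  have key : ∀ (y : B) (i : B), ρ i y ≠ 0 → ∀ a₀ ∈ A,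
      dist (a i) a₀ ≤ 6 * dist (y : X) a₀ := by
    intro y i hne a₀ ha₀
    have hy : y ∈ tsupport (ρ i) := subset_tsupport _ hne
    have hyi : dist (y : X) (i : X) < Metric.infDist (i : X) A / 2 := hρ i hy
    have h1 : Metric.infDist (i : X) A ≤ Metric.infDist (y : X) A + dist (i : X) (y : X) :=
      Metric.infDist_le_infDist_add_dist
    have h2 : Metric.infDist (y : X) A ≤ dist (y : X) a₀ :=
      Metric.infDist_le_dist_of_mem ha₀
    have h3 : dist (i : X) (a i) < 2 * Metric.infDist (i : X) A := haD i
    have h4 : dist (a i) a₀ ≤ dist (a i) (i : X) + dist (i : X) (y : X) + dist (y : X) a₀ :=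
      dist_triangle4 _ _ _ _
    rw [dist_comm (a i) (i : X)] at h4
    rw [dist_comm (i : X) (y : X)] at h1 h4
    linarith
  -- the extension
  let fC : X → L := fun x => if h : x ∈ A then f x else g ⟨x, h⟩
  have hfC_eq : ∀ x ∈ A, fC x = f x := fun x hx => dif_pos hx
  have hfC_not : ∀ x (h : x ∉ A), fC x = g ⟨x, h⟩ := fun x h => dif_neg h
  refine ⟨fC, ?_, hfC_eq, ?_⟩
  · rw [continuous_iff_continuousAt]
    intro x
    by_cases hx : x ∈ A
    · -- continuity at points of A
      rw [ContinuousAt]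
      have hfCx : fC x = f x := hfC_eq x hx
      rw [hfCx, (LocallyConvexSpace.convex_basis (𝕜 := ℝ) (f x)).tendsto_right_iff]
      rintro W ⟨hW, hWc⟩
      have hfW : f ⁻¹' W ∈ 𝓝[A] x := (hf x hx) hW
      rw [Metric.mem_nhdsWithin_iff] at hfW
      obtain ⟨δ, hδpos, hδ⟩ := hfW
      have : Metric.ball x (δ / 6) ∈ 𝓝 x := Metric.ball_mem_nhds _ (by linarith)
      filter_upwards [this] with z hz
      rw [Metric.mem_ball] at hz
      by_cases hzA : z ∈ A
      · rw [hfC_eq z hzA]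
        exact hδ ⟨Metric.mem_ball.2 (by linarith), hzA⟩
      · rw [hfC_not z hzA]
        refine hWc.finsum_mem (fun i => ρ.nonneg i _) (ρ.sum_eq_one (Set.mem_univ _)) ?_
        intro i hne
        have hdist := key ⟨z, hzA⟩ i hne x hx
        exact hδ ⟨Metric.mem_ball.2 (by simpa using by linarith : dist (a i) x < δ),
          haA i⟩
    · -- continuity on the open set `B`
      have hcont : ContinuousOn fC B := by
        rw [continuousOn_iff_continuous_restrict]
        exact hg_cont.congr fun y => (hfC_not y y.2).symm
      exact hcont.continuousAt (hA_closed.isOpen_compl.mem_nhds hx)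
  · intro x
    by_cases hx : x ∈ A
    · rw [hfC_eq x hx]
      exact subset_convexHull ℝ _ (Set.mem_image_of_mem f hx)
    · rw [hfC_not x hx]
      refine (convex_convexHull ℝ _).finsum_mem (fun i => ρ.nonneg i _)
        (ρ.sum_eq_one (Set.mem_univ _)) ?_
      intro i _
      exact subset_convexHull ℝ _ (Set.mem_image_of_mem f (haA i))
end

section
/- Let W be a Polish space, Y a Polish space, μ a finite Borel measure on W, and p a stochastic kernel from W to Y (i.e., a Borel-measurable map from W into P(Y) with the weak topology). Then for every β > 0 there exists a stochastic kernel p_C from W to Y such that w ↦ p_C(·|w) is continuous from W into P(Y) with the weak topology, and μ{w : p_C(·|w) ≠ p(·|w)} < β. -/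
open MeasureTheory Filter Topology
open scoped NNReal ENNReal

section Aux
open Metric Set TopologicalSpace
open scoped BoundedContinuousFunction
instance : Countable ℚ≥0 := Function.Injective.countable NNRat.coe_injective

section ListMeasure
variable {Y : Type*} [MeasurableSpace Y]

noncomputable def listMeasure (l : List (ℚ≥0 × Y)) : Measure Y :=
  (l.map fun p => ((p.1 : ℝ≥0) : ℝ≥0∞) • Measure.dirac p.2).sum

lemma list_range_map_sum {M : Type*} [AddCommMonoid M] (g : ℕ → M) (n : ℕ) :
    ((List.range n).map g).sum = ∑ j ∈ Finset.range n, g j := by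
  induction n with
  | zero => simp
  | succ n ih =>
    rw [List.range_succ, List.map_append, List.sum_append, Finset.sum_range_succ, ih]
    simp

lemma listMeasure_range_map (q : ℕ → ℚ≥0) (z : ℕ → Y) (n : ℕ) :
    listMeasure ((List.range n).map (fun j => (q j, z j))) =
      ∑ j ∈ Finset.range n, ((q j : ℝ≥0) : ℝ≥0∞) • Measure.dirac (z j) := by
  unfold listMeasure
  rw [List.map_map]
  exact list_range_map_sum _ n

end ListMeasure

section LP1
variable {Y : Type*} [MetricSpace Y] [MeasurableSpace Y] [OpensMeasurableSpace Y]

lemma lp_dist_map_le (ν : Measure Y) [IsProbabilityMeasure ν] {f : Y → Y} (hf : Measurable f)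
    {a : ℝ} (ha : 0 ≤ a) {G : Set Y}
    (hdist : ∀ y ∈ G, dist y (f y) ≤ a) (hGc : ν Gᶜ ≤ ENNReal.ofReal a) :
    levyProkhorovDist ν (ν.map f) ≤ a := by
  haveI : IsProbabilityMeasure (ν.map f) := Measure.isProbabilityMeasure_map hf.aemeasurable
  apply levyProkhorovDist_le_of_forall_le ν (ν.map f) ha
  intro ε B hε hB
  have h2 : B ∩ G ⊆ f ⁻¹' (thickening ε B) := by
    rintro y ⟨hyB, hyG⟩
    rw [mem_preimage, Metric.mem_thickening_iff]
    exact ⟨y, hyB, lt_of_le_of_lt (by rw [dist_comm]; exact hdist y hyG) hε⟩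
  calc ν B ≤ ν (B ∩ G) + ν (B \ G) := measure_le_inter_add_diff ν B G
    _ ≤ ν.map f (thickening ε B) + ENNReal.ofReal ε := by
        refine add_le_add ?_ ?_
        · rw [Measure.map_apply hf isOpen_thickening.measurableSet]
          exact measure_mono h2
        · exact le_trans (measure_mono (diff_subset_compl B G)) <|
            hGc.trans (ENNReal.ofReal_le_ofReal hε.le)

end LP1

section Sep
variable {Y : Type*} [MetricSpace Y] [SecondCountableTopology Y] [MeasurableSpace Y] [BorelSpace Y]

theorem probabilityMeasure_separableSpace : SeparableSpace (ProbabilityMeasure Y) := by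
  by_cases hY : Nonempty Y
  · suffices h : SeparableSpace (LevyProkhorov (ProbabilityMeasure Y)) by
      exact ((LevyProkhorov.probabilityMeasureHomeomorph (Ω := Y)).symm.surjective.denseRange.separableSpace
        (LevyProkhorov.probabilityMeasureHomeomorph (Ω := Y)).symm.continuous)
    obtain ⟨s, s_ctble, s_dense⟩ := exists_countable_dense Y
    haveI := s_ctble.to_subtype
    obtain ⟨y₀, hy₀⟩ : s.Nonempty := s_dense.nonempty
    let LM : List (ℚ≥0 × ↥s) → Measure Y := fun l => listMeasure (l.map fun p => (p.1, (p.2 : Y)))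
    let T := {l : List (ℚ≥0 × ↥s) // IsProbabilityMeasure (LM l)}
    let G : T → LevyProkhorov (ProbabilityMeasure Y) := fun t =>
      (LevyProkhorov.toMeasureEquiv (α := ProbabilityMeasure Y)).symm ⟨LM t.1, t.2⟩
    haveI : Countable T := Subtype.countable
    refine ⟨⟨Set.range G, countable_range _, ?_⟩⟩
    have : DenseRange G := by
      rw [Metric.denseRange_iff]
      intro P r hr
      classical
      set Pν : ProbabilityMeasure Y := LevyProkhorov.toMeasureEquiv (α := ProbabilityMeasure Y) P with hPν
      set ν : Measure Y := Pν.toMeasure with hν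
      haveI : IsProbabilityMeasure ν := Pν.2
      set a : ℝ := r / 3 with ha_def
      have ha : 0 < a := by positivity
      -- partition of Y into small measurable pieces
      obtain ⟨As, As_mble, As_bdd, As_diam, As_cover, As_disj⟩ :=
        SeparableSpace.exists_measurable_partition_diam_le Y (half_pos ha)
      have ex : ∀ y : Y, ∃ k, y ∈ As k := fun y => by
        rw [← Set.mem_iUnion, As_cover]; trivial
      set idx : Y → ℕ := fun y => Nat.find (ex y) with hidx_def
      have idx_mem : ∀ y, y ∈ As (idx y) := fun y => Nat.find_spec (ex y)
      have idx_mble : Measurable idx := by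
        apply measurable_to_countable'
        intro k
        have hset : idx ⁻¹' {k} = As k \ ⋃ j ∈ Finset.range k, As j := by
          ext y
          simp only [Set.mem_preimage, Set.mem_singleton_iff, Set.mem_diff, Set.mem_iUnion,
            Finset.mem_range, not_exists]
          constructor
          · rintro rfl
            exact ⟨idx_mem y, fun j hj => Nat.find_min (ex y) hj⟩
          · rintro ⟨hyk, hmin⟩
            have h1 : idx y ≤ k := Nat.find_min' (ex y) hyk
            rcases lt_or_eq_of_le h1 with h | h
            · exact absurd (idx_mem y) (hmin _ h)
            · exact h
        rw [hset]
        exact ((As_mble k).diff (Finset.measurableSet_biUnion _ fun j _ => As_mble j))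
      -- tail bound
      set Gs : ℕ → Set Y := fun K => ⋃ j ∈ Finset.range K, As j with hGs_def
      have Gs_mble : ∀ K, MeasurableSet (Gs K) :=
        fun K => Finset.measurableSet_biUnion _ fun j _ => As_mble j
      have Gs_mono : Monotone Gs := by
        intro K1 K2 h
        apply Set.iUnion₂_subset
        intro j hj
        exact Set.subset_biUnion_of_mem
          (Finset.mem_range.2 (lt_of_lt_of_le (Finset.mem_range.1 hj) h))
      have Gs_union : ⋃ K, Gs K = Set.univ := by
        apply Set.eq_univ_of_forall
        intro y
        obtain ⟨k, hk⟩ := ex y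
        exact Set.mem_iUnion.2 ⟨k + 1, Set.mem_biUnion (Finset.self_mem_range_succ k) hk⟩
      have htail := tendsto_measure_iUnion_atTop (μ := ν) Gs_mono
      rw [Gs_union, measure_univ] at htail
      have hlt : (1 : ℝ≥0∞) - ENNReal.ofReal a < 1 :=
        ENNReal.sub_lt_self ENNReal.one_ne_top one_ne_zero (by simp [ENNReal.ofReal_pos, ha])
      obtain ⟨K, hK⟩ := (htail.eventually (eventually_gt_nhds hlt)).exists
      have hGc : ν (Gs K)ᶜ ≤ ENNReal.ofReal a := by
        rw [measure_compl (Gs_mble K) (measure_ne_top ν _), measure_univ]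
        rw [tsub_le_iff_right]
        calc (1 : ℝ≥0∞) ≤ (1 - ENNReal.ofReal a) + ENNReal.ofReal a := le_tsub_add
          _ ≤ ν (Gs K) + ENNReal.ofReal a := add_le_add hK.le le_rfl
          _ = ENNReal.ofReal a + ν (Gs K) := add_comm _ _
      -- choice of representative points in s
      set xk : ℕ → ↥s := fun k =>
        if h : (As k).Nonempty then
          ⟨(s_dense.exists_dist_lt h.choose (half_pos ha)).choose,
           (s_dense.exists_dist_lt h.choose (half_pos ha)).choose_spec.1⟩
        else ⟨y₀, hy₀⟩ with hxk_def
      have xk_close : ∀ k (h : (As k).Nonempty), ∀ y ∈ As k, dist y (xk k : Y) ≤ a := by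
        intro k h y hy
        have h1 : dist y h.choose ≤ a / 2 :=
          le_trans (dist_le_diam_of_mem (As_bdd k) hy h.choose_spec) (As_diam k)
        have h2 : dist (h.choose) ((xk k : Y)) < a / 2 := by
          simp only [hxk_def, dif_pos h]
          exact (s_dense.exists_dist_lt h.choose (half_pos ha)).choose_spec.2
        calc dist y (xk k : Y) ≤ dist y h.choose + dist h.choose (xk k : Y) := dist_triangle _ _ _
          _ ≤ a / 2 + a / 2 := add_le_add h1 h2.le
          _ = a := by ring
      set e : Y → ℕ := fun y => min (idx y) K with he_def
      set z : ℕ → ↥s := fun j => if j < K then xk j else ⟨y₀, hy₀⟩ with hz_def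
      set f : Y → Y := fun y => (z (e y) : Y) with hf_def
      have e_mble : Measurable e := idx_mble.min measurable_const
      have e_le : ∀ y, e y ≤ K := fun y => min_le_right _ _
      have f_mble : Measurable f :=
        (measurable_from_top (f := fun j => (z j : Y))).comp e_mble
      have f_close : ∀ y ∈ Gs K, dist y (f y) ≤ a := by
        intro y hy
        simp only [hGs_def, Set.mem_iUnion, Finset.mem_range] at hy
        obtain ⟨j, hj, hyj⟩ := hy
        have hidxK : idx y < K := lt_of_le_of_lt (Nat.find_min' (ex y) hyj) hj
        have he : e y = idx y := min_eq_left hidxK.le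
        have hfz : f y = (xk (idx y) : Y) := by
          simp only [hf_def, he, hz_def, if_pos hidxK]
        rw [hfz]
        exact xk_close (idx y) ⟨y, idx_mem y⟩ y (idx_mem y)
      -- first LP estimate
      have lp1 : levyProkhorovDist ν (ν.map f) ≤ a :=
        lp_dist_map_le ν f_mble ha.le f_close hGc
      -- fiber masses
      set c : ℕ → ℝ≥0∞ := fun j => ν (e ⁻¹' {j}) with hc_def
      have fib_mble : ∀ j : ℕ, MeasurableSet (e ⁻¹' {j}) :=
        fun j => e_mble (measurableSet_singleton j)
      have fib_disj : ∀ i j : ℕ, i ≠ j → Disjoint (e ⁻¹' {i}) (e ⁻¹' {j}) := by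
        intro i j hij
        apply Set.disjoint_left.2
        intro y hyi hyj
        simp only [Set.mem_preimage, Set.mem_singleton_iff] at hyi hyj
        exact hij (hyi ▸ hyj ▸ rfl)
      have c_sum : ∑ j ∈ Finset.range (K + 1), c j = 1 := by
        rw [← measure_biUnion_finset
          (fun i _ j _ h => fib_disj i j h) (fun j _ => fib_mble j)]
        have : ⋃ j ∈ Finset.range (K + 1), e ⁻¹' {j} = Set.univ := by
          apply Set.eq_univ_of_forall
          intro y
          exact Set.mem_biUnion (Finset.mem_range.2 (Nat.lt_succ_of_le (e_le y)))
            (Set.mem_singleton _)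
        rw [this, measure_univ]
      -- real masses and rational approximations
      set rr : ℕ → ℝ := fun j => (c j).toReal with hrr_def
      have rr_nonneg : ∀ j, 0 ≤ rr j := fun j => ENNReal.toReal_nonneg
      have rr_sum : ∑ j ∈ Finset.range (K + 1), rr j = 1 := by
        rw [hrr_def, ← ENNReal.toReal_sum (fun j _ => measure_ne_top ν _), c_sum, ENNReal.toReal_one]
      set ε' : ℝ := a / (K + 1) with hε'_def
      have hε' : 0 < ε' := by positivity
      have hqex : ∀ j, ¬ rr j ≤ ε' → rr j - ε' < rr j := fun j h => by
        linarith [not_le.1 h]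
      set q : ℕ → ℚ≥0 := fun j =>
        if h : rr j ≤ ε' then 0 else (exists_rat_btwn (hqex j h)).choose.toNNRat
        with hq_def
      have qcast : ∀ (t : ℚ) (h : 0 ≤ t), ((t.toNNRat : ℝ≥0) : ℝ) = (t : ℝ) := by
        intro t h
        have h2 : ((t.toNNRat : ℝ≥0) : ℝ) = ((t.toNNRat : ℚ) : ℝ) := by norm_cast
        rw [h2, Rat.coe_toNNRat t h]
      have hchoose_nonneg : ∀ j (h : ¬ rr j ≤ ε'), (0:ℚ) ≤ (exists_rat_btwn (hqex j h)).choose := by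
        intro j h
        have hspec := (exists_rat_btwn (hqex j h)).choose_spec
        have h3 := not_le.1 h
        have : (0:ℝ) ≤ ((exists_rat_btwn (hqex j h)).choose : ℝ) := by linarith [hspec.1]
        exact_mod_cast this
      have hq1 : ∀ j, ((q j : ℝ≥0) : ℝ) ≤ rr j := by
        intro j
        by_cases h : rr j ≤ ε'
        · simp only [hq_def, dif_pos h]
          simpa using rr_nonneg j
        · have hspec := (exists_rat_btwn (hqex j h)).choose_spec
          simp only [hq_def, dif_neg h]
          rw [qcast _ (hchoose_nonneg j h)]
          exact hspec.2.le
      have hq2 : ∀ j, rr j - ((q j : ℝ≥0) : ℝ) ≤ ε' := by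
        intro j
        by_cases h : rr j ≤ ε'
        · simp only [hq_def, dif_pos h]
          simpa using h
        · have hspec := (exists_rat_btwn (hqex j h)).choose_spec
          simp only [hq_def, dif_neg h]
          rw [qcast _ (hchoose_nonneg j h)]
          linarith [hspec.1]
      -- total rational mass and defect
      set dsum : ℚ≥0 := ∑ j ∈ Finset.range (K + 1), q j with hdsum_def
      have nnratCast_sum : ∀ (m : Finset ℕ) (g : ℕ → ℚ≥0),
          ((∑ j ∈ m, g j : ℚ≥0) : ℝ≥0) = ∑ j ∈ m, ((g j : ℝ≥0)) := by
        intro m g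
        exact map_sum (NNRat.castHom ℝ≥0) g m
      have hdsum_le : dsum ≤ 1 := by
        have h1 : ((dsum : ℝ≥0) : ℝ) ≤ 1 := by
          rw [hdsum_def, nnratCast_sum]
          push_cast
          calc ∑ j ∈ Finset.range (K + 1), ((q j : ℝ≥0) : ℝ)
              ≤ ∑ j ∈ Finset.range (K + 1), rr j := Finset.sum_le_sum fun j _ => hq1 j
            _ = 1 := rr_sum
        have h2 : ((dsum : ℝ≥0) : ℝ) ≤ (((1:ℚ≥0) : ℝ≥0) : ℝ) := by simpa using h1
        exact_mod_cast h2
      set d : ℚ≥0 := 1 - dsum with hd_def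
      set q' : ℕ → ℚ≥0 := fun j => if j = K then q K + d else q j with hq'_def
      have hq'_ge : ∀ j, q j ≤ q' j := by
        intro j
        by_cases h : j = K
        · subst h; simp only [hq'_def, if_pos rfl]; exact le_self_add
        · simp [hq'_def, if_neg h]
      have hq'_sum : ∑ j ∈ Finset.range (K + 1), q' j = 1 := by
        rw [Finset.sum_range_succ]
        have h1 : ∀ j ∈ Finset.range K, q' j = q j := by
          intro j hj
          simp [hq'_def, (Finset.mem_range.1 hj).ne]
        rw [Finset.sum_congr rfl h1]
        simp only [hq'_def, if_pos rfl]
        have : (∑ j ∈ Finset.range K, q j) + (q K + d) = dsum + d := by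
          rw [hdsum_def, Finset.sum_range_succ, add_assoc]
        rw [this, hd_def, add_tsub_cancel_of_le hdsum_le]
      have hq'2 : ∀ j, rr j - ((q' j : ℝ≥0) : ℝ) ≤ ε' := by
        intro j
        have h1 : ((q j : ℝ≥0) : ℝ) ≤ ((q' j : ℝ≥0) : ℝ) := by
          exact_mod_cast hq'_ge j
        linarith [hq2 j]
      -- the candidate measure
      set l : List (ℚ≥0 × ↥s) := (List.range (K + 1)).map (fun j => (q' j, z j)) with hl_def
      have lmeas : LM l = ∑ j ∈ Finset.range (K + 1),
          ((q' j : ℝ≥0) : ℝ≥0∞) • Measure.dirac ((z j : Y)) := by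
        simp only [LM, hl_def, List.map_map]
        exact listMeasure_range_map _ _ _
      have q'sum_ennreal : ∑ j ∈ Finset.range (K + 1), ((q' j : ℝ≥0) : ℝ≥0∞) = 1 := by
        rw [← ENNReal.coe_finset_sum, ← nnratCast_sum _ q', hq'_sum]
        simp
      haveI hLM : IsProbabilityMeasure (LM l) := by
        constructor
        rw [lmeas, Measure.finset_sum_apply]
        simp only [Measure.smul_apply, measure_univ, smul_eq_mul, mul_one]
        exact q'sum_ennreal
      -- total variation style bound
      have c_eq : ∀ j, c j = ENNReal.ofReal (rr j) := by
        intro j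
        rw [hrr_def]
        exact (ENNReal.ofReal_toReal (measure_ne_top ν _)).symm
      have tv : ∀ B : Set Y, MeasurableSet B →
          (ν.map f) B ≤ (LM l) B + ENNReal.ofReal a := by
        intro B hB
        set SB : Finset ℕ := (Finset.range (K + 1)).filter (fun j => (z j : Y) ∈ B) with hSB_def
        have hpre : f ⁻¹' B = ⋃ j ∈ SB, e ⁻¹' {j} := by
          ext y
          simp only [Set.mem_preimage, Set.mem_iUnion, hSB_def, Finset.mem_filter,
            Finset.mem_range, Set.mem_singleton_iff, exists_prop]
          constructor
          · intro hy
            exact ⟨e y, ⟨Nat.lt_succ_of_le (e_le y), hy⟩, rfl⟩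
          · rintro ⟨j, ⟨_, hzj⟩, rfl⟩
            exact hzj
        have hmapB : (ν.map f) B = ∑ j ∈ SB, c j := by
          rw [Measure.map_apply f_mble hB, hpre,
            measure_biUnion_finset (fun i _ j _ h => fib_disj i j h) (fun j _ => fib_mble j)]
        have hLMB : ∑ j ∈ SB, ((q' j : ℝ≥0) : ℝ≥0∞) ≤ (LM l) B := by
          rw [lmeas, Measure.finset_sum_apply]
          have hsub : SB ⊆ Finset.range (K + 1) := by
            rw [hSB_def]; exact Finset.filter_subset _ _
          refine le_trans (le_of_eq ?_) (Finset.sum_le_sum_of_subset hsub)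
          refine Finset.sum_congr rfl ?_
          intro j hj
          have hzj : (z j : Y) ∈ B := (Finset.mem_filter.1 hj).2
          rw [Measure.smul_apply, Measure.dirac_apply' _ hB, Set.indicator_of_mem hzj]
          simp
        have termwise : ∀ j ∈ SB, c j ≤ ((q' j : ℝ≥0) : ℝ≥0∞) + ENNReal.ofReal ε' := by
          intro j _
          rw [c_eq j]
          calc ENNReal.ofReal (rr j) ≤ ENNReal.ofReal (((q' j : ℝ≥0) : ℝ) + ε') := by
                apply ENNReal.ofReal_le_ofReal
                linarith [hq'2 j]
            _ = ((q' j : ℝ≥0) : ℝ≥0∞) + ENNReal.ofReal ε' := by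
                rw [ENNReal.ofReal_add NNReal.zero_le_coe hε'.le, ENNReal.ofReal_coe_nnreal]
        calc (ν.map f) B = ∑ j ∈ SB, c j := hmapB
          _ ≤ ∑ j ∈ SB, (((q' j : ℝ≥0) : ℝ≥0∞) + ENNReal.ofReal ε') :=
              Finset.sum_le_sum termwise
          _ = (∑ j ∈ SB, ((q' j : ℝ≥0) : ℝ≥0∞)) + SB.card • ENNReal.ofReal ε' := by
              rw [Finset.sum_add_distrib, Finset.sum_const]
          _ ≤ (LM l) B + ENNReal.ofReal a := by
              refine add_le_add hLMB ?_
              rw [nsmul_eq_mul]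
              have hcard0 : SB.card ≤ K + 1 := by
                have h := Finset.card_filter_le (Finset.range (K + 1)) (fun j => (z j : Y) ∈ B)
                simpa [Finset.card_range] using h
              have hcard : (SB.card : ℝ≥0∞) ≤ ((K + 1 : ℕ) : ℝ≥0∞) := by
                exact_mod_cast hcard0
              calc (SB.card : ℝ≥0∞) * ENNReal.ofReal ε'
                  ≤ ((K + 1 : ℕ) : ℝ≥0∞) * ENNReal.ofReal ε' := by gcongr
                _ = ENNReal.ofReal ((K + 1 : ℕ) * ε') := by
                    rw [ENNReal.ofReal_mul (by positivity), ENNReal.ofReal_natCast]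
                _ = ENNReal.ofReal a := by
                    congr 1
                    rw [hε'_def]
                    field_simp
                    norm_num
      haveI : IsProbabilityMeasure (ν.map f) := Measure.isProbabilityMeasure_map f_mble.aemeasurable
      have lp2 : levyProkhorovDist (ν.map f) (LM l) ≤ a := by
        apply levyProkhorovDist_le_of_forall_le _ _ ha.le
        intro ε B hε hB
        calc (ν.map f) B ≤ (LM l) B + ENNReal.ofReal a := tv B hB
          _ ≤ (LM l) (thickening ε B) + ENNReal.ofReal ε := by
              refine add_le_add (measure_mono (self_subset_thickening (ha.trans hε) B)) ?_
              exact ENNReal.ofReal_le_ofReal hε.le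
      refine ⟨⟨l, hLM⟩, ?_⟩
      have hdist : dist P (G ⟨l, hLM⟩) = levyProkhorovDist ν (LM l) := by
        rw [LevyProkhorov.dist_probabilityMeasure_def]
        rfl
      rw [hdist]
      calc levyProkhorovDist ν (LM l)
          ≤ levyProkhorovDist ν (ν.map f) + levyProkhorovDist (ν.map f) (LM l) :=
            levyProkhorovDist_triangle _ _ _
        _ ≤ a + a := add_le_add lp1 lp2
        _ < r := by rw [ha_def]; linarith
    exact this
  · rw [not_nonempty_iff] at hY
    haveI : IsEmpty (ProbabilityMeasure Y) := by
      refine ⟨fun P => ?_⟩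
      have h1 := P.2.measure_univ
      rw [Set.univ_eq_empty_iff.2 hY, measure_empty] at h1
      exact zero_ne_one h1
    exact ⟨⟨∅, countable_empty, by rw [dense_iff_closure_eq]; exact Subsingleton.elim _ _⟩⟩

end Sep

section Lusin
variable {W : Type*} [MetricSpace W] [MeasurableSpace W] [BorelSpace W]
variable {Z : Type*} [PseudoMetricSpace Z] [SeparableSpace Z]

theorem lusin_general (μ : Measure W) [IsFiniteMeasure μ] (p : W → Z)
    (hp : @Measurable W Z _ (borel Z) p) {β : ℝ} (hβ : 0 < β) :
    ∃ F : Set W, IsClosed F ∧ μ Fᶜ < ENNReal.ofReal β ∧ ContinuousOn p F := by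
  classical
  letI : MeasurableSpace Z := borel Z
  haveI : BorelSpace Z := ⟨rfl⟩
  -- partitions of Z at all scales
  have H : ∀ n : ℕ, ∃ As : ℕ → Set Z, (∀ k, MeasurableSet (As k)) ∧
      (∀ k, Bornology.IsBounded (As k)) ∧ (∀ k, diam (As k) ≤ 1 / (n + 1)) ∧
      (⋃ k, As k = univ) ∧ (Pairwise fun k m => Disjoint (As k) (As m)) := by
    intro n
    exact SeparableSpace.exists_measurable_partition_diam_le Z
      (by positivity : (0:ℝ) < 1 / (n + 1))
  choose As As_mble As_bdd As_diam As_cover As_disj using H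
  set A : ℕ → ℕ → Set W := fun n k => p ⁻¹' As n k with hA_def
  have A_mble : ∀ n k, MeasurableSet (A n k) := fun n k => hp (As_mble n k)
  have A_disj : ∀ n, ∀ k m, k ≠ m → Disjoint (A n k) (A n m) := by
    intro n k m hkm
    exact Set.disjoint_left.2 fun w h1 h2 =>
      Set.disjoint_left.1 (As_disj n hkm) h1 h2
  set εn : ℕ → ℝ≥0∞ := fun n => ENNReal.ofReal β * 2⁻¹ ^ (n + 3) with hεn_def
  have εn_ne : ∀ n, εn n ≠ 0 := by
    intro n
    simp only [hεn_def]
    refine mul_ne_zero ?_ (pow_ne_zero _ (by simp))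
    simp [ENNReal.ofReal_eq_zero, hβ, not_le]
  -- choose a finite union of pieces capturing most mass
  have HK : ∀ n : ℕ, ∃ K : ℕ, μ (⋃ k ∈ Finset.range K, A n k)ᶜ ≤ εn n := by
    intro n
    set Gs : ℕ → Set W := fun K => ⋃ k ∈ Finset.range K, A n k with hGs_def
    have Gs_mble : ∀ K, MeasurableSet (Gs K) :=
      fun K => Finset.measurableSet_biUnion _ fun k _ => A_mble n k
    by_cases h : μ univ ≤ εn n
    · exact ⟨0, le_trans (measure_mono (subset_univ _)) h⟩
    · push_neg at h
      have Gs_mono : Monotone Gs := by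
        intro K1 K2 hK
        apply Set.iUnion₂_subset
        intro k hk
        exact Set.subset_biUnion_of_mem
          (Finset.mem_range.2 (lt_of_lt_of_le (Finset.mem_range.1 hk) hK))
      have Gs_union : ⋃ K, Gs K = univ := by
        apply Set.eq_univ_of_forall
        intro w
        have : p w ∈ ⋃ k, As n k := by rw [As_cover n]; trivial
        obtain ⟨k, hk⟩ := Set.mem_iUnion.1 this
        exact Set.mem_iUnion.2 ⟨k + 1, Set.mem_biUnion (Finset.self_mem_range_succ k) hk⟩
      have htail := tendsto_measure_iUnion_atTop (μ := μ) Gs_mono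
      rw [Gs_union] at htail
      have hlt : μ univ - εn n < μ univ :=
        ENNReal.sub_lt_self (measure_ne_top μ _) (pos_of_gt h).ne' (εn_ne n)
      obtain ⟨K, hK⟩ := (htail.eventually (eventually_gt_nhds hlt)).exists
      refine ⟨K, ?_⟩
      rw [measure_compl (Gs_mble K) (measure_ne_top μ _), tsub_le_iff_right]
      calc μ univ ≤ (μ univ - εn n) + εn n := le_tsub_add
        _ ≤ μ (Gs K) + εn n := add_le_add hK.le le_rfl
        _ = εn n + μ (Gs K) := add_comm _ _
  choose K hK using HK
  -- closed approximations from inside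
  have HC : ∀ n k : ℕ, ∃ C, C ⊆ A n k ∧ IsClosed C ∧ μ (A n k \ C) < εn n / K n := by
    intro n k
    have hne : εn n / (K n : ℝ≥0∞) ≠ 0 := by
      rw [ne_eq, ENNReal.div_eq_zero_iff]
      push_neg
      exact ⟨εn_ne n, by simp⟩
    obtain ⟨C, hC1, hC2, hC3⟩ :=
      (A_mble n k).exists_isClosed_diff_lt (measure_ne_top μ _) hne
    exact ⟨C, hC1, hC2, hC3⟩
  choose C C_sub C_closed C_meas using HC
  set Fn : ℕ → Set W := fun n => ⋃ k ∈ Finset.range (K n), C n k with hFn_def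
  have Fn_closed : ∀ n, IsClosed (Fn n) :=
    fun n => (Finset.range (K n)).finite_toSet.isClosed_biUnion fun k _ => C_closed n k
  have Fn_compl : ∀ n, μ (Fn n)ᶜ ≤ 2 * εn n := by
    intro n
    have hsub : (Fn n)ᶜ ⊆ (⋃ k ∈ Finset.range (K n), A n k)ᶜ ∪
        ⋃ k ∈ Finset.range (K n), (A n k \ C n k) := by
      intro w hw
      by_cases h : w ∈ ⋃ k ∈ Finset.range (K n), A n k
      · obtain ⟨k, hk1, hk2⟩ := Set.mem_iUnion₂.1 h
        refine Or.inr (Set.mem_iUnion₂.2 ⟨k, hk1, hk2, ?_⟩)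
        intro hC
        exact hw (Set.mem_iUnion₂.2 ⟨k, hk1, hC⟩)
      · exact Or.inl h
    calc μ (Fn n)ᶜ ≤ μ ((⋃ k ∈ Finset.range (K n), A n k)ᶜ) +
          μ (⋃ k ∈ Finset.range (K n), (A n k \ C n k)) :=
        le_trans (measure_mono hsub) (measure_union_le _ _)
      _ ≤ εn n + ∑ k ∈ Finset.range (K n), μ (A n k \ C n k) :=
        add_le_add (hK n) (measure_biUnion_finset_le _ _)
      _ ≤ εn n + ∑ _k ∈ Finset.range (K n), εn n / K n :=
        add_le_add le_rfl (Finset.sum_le_sum fun k _ => (C_meas n k).le)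
      _ ≤ εn n + εn n := by
        refine add_le_add le_rfl ?_
        rw [Finset.sum_const, Finset.card_range, nsmul_eq_mul]
        exact ENNReal.mul_div_le
      _ = 2 * εn n := (two_mul _).symm
  refine ⟨⋂ n, Fn n, isClosed_iInter Fn_closed, ?_, ?_⟩
  · rw [Set.compl_iInter]
    calc μ (⋃ n, (Fn n)ᶜ) ≤ ∑' n, μ (Fn n)ᶜ := measure_iUnion_le _
      _ ≤ ∑' n, 2 * εn n := ENNReal.tsum_le_tsum Fn_compl
      _ = ENNReal.ofReal β * ∑' n : ℕ, (2 * 2⁻¹ ^ (n + 3)) := by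
          rw [← ENNReal.tsum_mul_left]
          refine tsum_congr fun n => ?_
          rw [hεn_def]
          ring
      _ = ENNReal.ofReal β * 2⁻¹ := by
          congr 1
          rw [ENNReal.tsum_mul_left]
          rw [show (∑' n : ℕ, (2⁻¹:ℝ≥0∞) ^ (n+3)) = 4⁻¹ by
            simp_rw [pow_add]
            rw [ENNReal.tsum_mul_right, ENNReal.tsum_geometric, ENNReal.one_sub_inv_two,
              inv_inv, show ((2:ℝ≥0∞)⁻¹)^3 = 8⁻¹ by rw [← ENNReal.inv_pow]; norm_num,
              show ((8:ℝ≥0∞)) = 2 * 4 by norm_num,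
              ENNReal.mul_inv (by norm_num) (by norm_num), ← mul_assoc,
              ENNReal.mul_inv_cancel (by norm_num) (by norm_num), one_mul]]
          rw [show ((4:ℝ≥0∞)) = 2 * 2 by norm_num,
            ENNReal.mul_inv (by norm_num) (by norm_num), ← mul_assoc,
            ENNReal.mul_inv_cancel (by norm_num) (by norm_num), one_mul]
      _ < ENNReal.ofReal β := by
          have hb0 : ENNReal.ofReal β ≠ 0 := by simp [ENNReal.ofReal_eq_zero, hβ, not_le]
          calc ENNReal.ofReal β * 2⁻¹ = ENNReal.ofReal β / 2 := by
                rw [ENNReal.div_eq_inv_mul, mul_comm]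
            _ < ENNReal.ofReal β := ENNReal.half_lt_self hb0 ENNReal.ofReal_ne_top
  · intro x hx
    rw [Metric.continuousWithinAt_iff]
    intro ε hε
    obtain ⟨n, hn⟩ := exists_nat_one_div_lt hε
    have hxFn : x ∈ Fn n := Set.mem_iInter.1 hx n
    obtain ⟨k₀, hk₀, hxk₀⟩ := Set.mem_iUnion₂.1 hxFn
    set V : Set W := ⋂ k ∈ (Finset.range (K n)).erase k₀, (C n k)ᶜ with hV_def
    have V_open : IsOpen V :=
      Set.Finite.isOpen_biInter (Finset.finite_toSet _)
        (fun k _ => (C_closed n k).isOpen_compl)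
    have hxV : x ∈ V := by
      apply Set.mem_iInter₂.2
      intro k hk
      have hkne : k ≠ k₀ := (Finset.mem_erase.1 hk).1
      intro hxk
      have h1 : x ∈ A n k := C_sub n k hxk
      have h2 : x ∈ A n k₀ := C_sub n k₀ hxk₀
      exact Set.disjoint_left.1 (A_disj n k k₀ hkne) h1 h2
    obtain ⟨δ, hδ, hball⟩ := Metric.isOpen_iff.1 V_open x hxV
    refine ⟨δ, hδ, ?_⟩
    intro y hy hyx
    have hyFn : y ∈ Fn n := Set.mem_iInter.1 hy n
    obtain ⟨k, hk, hyk⟩ := Set.mem_iUnion₂.1 hyFn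
    have hkk₀ : k = k₀ := by
      by_contra hne
      have : y ∈ V := hball hyx
      have := Set.mem_iInter₂.1 this k (Finset.mem_erase.2 ⟨hne, hk⟩)
      exact this hyk
    subst hkk₀
    have h1 : p y ∈ As n k := C_sub n k hyk
    have h2 : p x ∈ As n k := C_sub n k hxk₀
    calc dist (p y) (p x) ≤ diam (As n k) := dist_le_diam_of_mem (As_bdd n k) h1 h2
      _ ≤ 1 / (n + 1) := As_diam n k
      _ < ε := hn

end Lusin

section Dugundji
variable {W : Type*} [MetricSpace W]
variable {Y : Type*} [MetricSpace Y] [MeasurableSpace Y] [OpensMeasurableSpace Y]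

theorem dugundji_probabilityMeasure (F : Set W) (hF : IsClosed F) (hFne : F.Nonempty)
    (p : W → ProbabilityMeasure Y) (hp : ContinuousOn p F) :
    ∃ q : W → ProbabilityMeasure Y, Continuous q ∧ ∀ w ∈ F, q w = p w := by
  classical
  set U : Set W := Fᶜ with hU_def
  have hU_open : IsOpen U := hF.isOpen_compl
  -- positive distance to F for points outside F
  have hr_pos : ∀ u : ↥U, 0 < infDist (u : W) F :=
    fun u => (hF.notMem_iff_infDist_pos hFne).1 u.2
  set V : ↥U → Set ↥U := fun u =>
    Subtype.val ⁻¹' (ball (u : W) (infDist (u : W) F / 8)) with hV_def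
  have V_open : ∀ u, IsOpen (V u) :=
    fun u => (isOpen_ball).preimage continuous_subtype_val
  have V_cover : (univ : Set ↥U) ⊆ ⋃ u, V u := by
    intro x _
    refine mem_iUnion.2 ⟨x, ?_⟩
    simp only [hV_def, mem_preimage, mem_ball, dist_self]
    exact div_pos (hr_pos x) (by norm_num)
  obtain ⟨φ, hφ⟩ := PartitionOfUnity.exists_isSubordinate isClosed_univ V V_open V_cover
  -- nearby points in F
  have ha : ∀ u : ↥U, ∃ y ∈ F, dist (u : W) y < 2 * infDist (u : W) F := by
    intro u
    rw [← infDist_lt_iff hFne]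
    nlinarith [hr_pos u]
  choose a ha_mem ha_dist using ha
  -- key geometric fact about supports
  have hsupp : ∀ (u x : ↥U), φ u x ≠ 0 → dist (x : W) (u : W) < infDist (u : W) F / 8 := by
    intro u x hne
    have hx : x ∈ tsupport (φ u) := subset_closure (by exact hne)
    have := hφ u hx
    simpa only [hV_def, mem_preimage, mem_ball] using this
  -- the values to combine
  set c : ↥U → ProbabilityMeasure Y := fun u => p (a u) with hc_def
  -- probability measure for points outside F
  have hprob : ∀ (w : W) (hw : w ∈ U), IsProbabilityMeasure
      (∑ u ∈ φ.finsupport ⟨w, hw⟩, ((φ u ⟨w, hw⟩).toNNReal : ℝ≥0) • (c u : Measure Y)) := by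
    intro w hw
    constructor
    rw [Measure.finset_sum_apply]
    simp only [Measure.smul_apply, measure_univ, ENNReal.smul_def, smul_eq_mul, mul_one]
    have h1 : ∀ u ∈ φ.finsupport ⟨w, hw⟩,
        (((φ u ⟨w, hw⟩).toNNReal : ℝ≥0) : ℝ≥0∞) = ENNReal.ofReal (φ u ⟨w, hw⟩) := by
      intro u _
      rfl
    rw [Finset.sum_congr rfl h1, ← ENNReal.ofReal_sum_of_nonneg
      (fun u _ => φ.nonneg u _), φ.sum_finsupport (mem_univ _)]
    simp
  set q : W → ProbabilityMeasure Y := fun w =>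
    if hw : w ∈ U then ⟨_, hprob w hw⟩ else p w with hq_def
  have hqF : ∀ w ∈ F, q w = p w := by
    intro w hw
    simp only [hq_def]
    exact dif_neg (by simpa [hU_def] using hw)
  refine ⟨q, ?_, hqF⟩
  -- the integral of a bounded continuous function against q
  have hint : ∀ (g : Y →ᵇ ℝ) (w : W) (hw : w ∈ U),
      ∫ y, g y ∂(q w : Measure Y) =
        ∑ u ∈ φ.finsupport ⟨w, hw⟩, φ u ⟨w, hw⟩ * ∫ y, g y ∂(c u : Measure Y) := by
    intro g w hw
    have hqw : (q w : Measure Y) =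
        ∑ u ∈ φ.finsupport ⟨w, hw⟩, ((φ u ⟨w, hw⟩).toNNReal : ℝ≥0) • (c u : Measure Y) := by
      simp only [hq_def]
      exact congrArg (fun m : ProbabilityMeasure Y => (m : Measure Y)) (dif_pos hw)
    rw [hqw, integral_finset_sum_measure]
    · refine Finset.sum_congr rfl fun u _ => ?_
      rw [integral_smul_nnreal_measure]
      simp only [NNReal.smul_def, smul_eq_mul]
      congr 1
      exact Real.coe_toNNReal _ (φ.nonneg u _)
    · intro u _
      exact (g.integrable _).smul_measure ENNReal.coe_ne_top
  -- continuity
  rw [continuous_iff_continuousAt]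
  intro x
  unfold ContinuousAt
  rw [ProbabilityMeasure.tendsto_iff_forall_integral_tendsto]
  intro g
  set Hg : W → ℝ := fun w => ∫ y, g y ∂(q w : Measure Y) with hHg_def
  show ContinuousAt Hg x
  by_cases hx : x ∈ U
  · -- interior of the complement: partition of unity is locally finite
    have hcontU : ContinuousOn Hg U := by
      rw [continuousOn_iff_continuous_restrict]
      have : U.restrict Hg = fun z : ↥U =>
          ∑ᶠ u, φ u z • (∫ y, g y ∂(c u : Measure Y)) := by
        funext z
        obtain ⟨zw, hz⟩ := z
        show Hg zw = _
        rw [hHg_def]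
        simp only []
        rw [hint g zw hz,
          ← φ.sum_finsupport_smul_eq_finsum (fun u (_ : ↥U) => ∫ y, g y ∂(c u : Measure Y))]
        simp [smul_eq_mul]
      rw [show U.domRestrict Hg = U.restrict Hg from rfl, this]
      exact φ.continuous_finsum_smul fun u z _ => continuousAt_const
    exact (hcontU.continuousAt (hU_open.mem_nhds hx) : ContinuousAt Hg x)
  · -- points of F : the Dugundji estimate
    have hxF : x ∈ F := by simpa [hU_def] using hx
    set h : W → ℝ := fun w => ∫ y, g y ∂(p w : Measure Y) with hh_def
    have hcont : ContinuousOn h F :=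
      (ProbabilityMeasure.continuous_integral_boundedContinuousFunction g).comp_continuousOn hp
    have hHgF : ∀ w ∈ F, Hg w = h w := by
      intro w hw
      rw [hHg_def, hh_def]
      simp only []
      rw [hqF w hw]
    rw [Metric.continuousAt_iff]
    intro ε hε
    obtain ⟨δ, hδ, hδ_close⟩ := Metric.continuousWithinAt_iff.1 (hcont x hxF) (ε / 2) (by linarith)
    refine ⟨δ / 4, by linarith, ?_⟩
    intro w hw
    have hHgx : Hg x = h x := hHgF x hxF
    by_cases hwF : w ∈ F
    · rw [hHgF w hwF, hHgx]
      exact lt_trans (hδ_close hwF (by linarith)) (by linarith)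
    · have hwU : w ∈ U := by simpa [hU_def] using hwF
      -- each contributing point a u is close to x
      have key : ∀ u ∈ φ.finsupport ⟨w, hwU⟩, dist (a u) x < δ := by
        intro u hu
        have hune : φ u ⟨w, hwU⟩ ≠ 0 := (φ.mem_finsupport _).1 hu
        have h1 : dist w (u : W) < infDist (u : W) F / 8 := hsupp u ⟨w, hwU⟩ hune
        have h2 : infDist (u : W) F ≤ dist (u : W) x := infDist_le_dist_of_mem hxF
        have h3 : dist (u : W) x ≤ dist (u : W) w + dist w x := dist_triangle _ _ _
        have h4 : dist w x < δ / 4 := hw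
        have h5 : dist (u : W) w = dist w (u : W) := dist_comm _ _
        have hru : infDist (u : W) F < (8 / 7) * (δ / 4) := by
          nlinarith [hr_pos u]
        have h6 : dist (a u) x ≤ dist (a u) (u : W) + dist (u : W) w + dist w x :=
          dist_triangle4 _ _ _ _
        have h7 : dist (a u) (u : W) < 2 * infDist (u : W) F := by
          rw [dist_comm]; exact ha_dist u
        nlinarith [hr_pos u]
      -- the convex combination estimate
      have hHgw : Hg w = ∑ u ∈ φ.finsupport ⟨w, hwU⟩,
          φ u ⟨w, hwU⟩ * ∫ y, g y ∂(c u : Measure Y) := hint g w hwU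
      rw [hHgw, hHgx]
      have hsum1 : ∑ u ∈ φ.finsupport ⟨w, hwU⟩, φ u ⟨w, hwU⟩ = 1 :=
        φ.sum_finsupport (mem_univ _)
      have hhx : h x = ∑ u ∈ φ.finsupport ⟨w, hwU⟩, φ u ⟨w, hwU⟩ * h x := by
        rw [← Finset.sum_mul, hsum1, one_mul]
      rw [Real.dist_eq, hhx, ← Finset.sum_sub_distrib]
      have habs : |∑ u ∈ φ.finsupport ⟨w, hwU⟩,
          (φ u ⟨w, hwU⟩ * ∫ y, g y ∂(c u : Measure Y) - φ u ⟨w, hwU⟩ * h x)| ≤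
          ∑ u ∈ φ.finsupport ⟨w, hwU⟩, φ u ⟨w, hwU⟩ * (ε / 2) := by
        refine le_trans (Finset.abs_sum_le_sum_abs _ _) (Finset.sum_le_sum ?_)
        intro u hu
        rw [← mul_sub, abs_mul, abs_of_nonneg (φ.nonneg u _)]
        refine mul_le_mul_of_nonneg_left ?_ (φ.nonneg u _)
        have : (∫ y, g y ∂(c u : Measure Y)) = h (a u) := rfl
        rw [this, ← Real.dist_eq]
        exact (hδ_close (ha_mem u) (key u hu)).le
      calc |∑ u ∈ φ.finsupport ⟨w, hwU⟩,
          (φ u ⟨w, hwU⟩ * ∫ y, g y ∂(c u : Measure Y) - φ u ⟨w, hwU⟩ * h x)| ≤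
          ∑ u ∈ φ.finsupport ⟨w, hwU⟩, φ u ⟨w, hwU⟩ * (ε / 2) := habs
        _ = ε / 2 := by rw [← Finset.sum_mul, hsum1, one_mul]
        _ < ε := by linarith

end Dugundji

end Aux

/-- Lusin + Dugundji for stochastic kernels: a Borel-measurable map
`p : W → P(Y)` (weak topology on `P(Y)`) can be approximated by a weakly continuous
kernel `p_C` agreeing with `p` except on a set of `μ`-measure less than `β`. -/
theorem lusin_dugundji_for_kernels
    {W : Type*} [MetricSpace W] [PolishSpace W] [MeasurableSpace W] [BorelSpace W]
    {Y : Type*} [MetricSpace Y] [PolishSpace Y] [MeasurableSpace Y] [BorelSpace Y]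
    (μ : Measure W) [IsFiniteMeasure μ]
    (p : W → ProbabilityMeasure Y)
    (hp : @Measurable W (ProbabilityMeasure Y) _ (borel (ProbabilityMeasure Y)) p)
    (β : ℝ) (hβ : 0 < β) :
    ∃ pC : W → ProbabilityMeasure Y,
      Continuous pC ∧ μ {w | pC w ≠ p w} < ENNReal.ofReal β := by
  -- Step 1: Lusin's theorem for the measurable kernel, using separability and
  -- metrizability of the space of probability measures.
  have lus : ∃ F : Set W, IsClosed F ∧ μ Fᶜ < ENNReal.ofReal β ∧ ContinuousOn p F := by
    haveI sep : TopologicalSpace.SeparableSpace (ProbabilityMeasure Y) :=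
      probabilityMeasure_separableSpace
    letI : MetricSpace (ProbabilityMeasure Y) :=
      TopologicalSpace.metrizableSpaceMetric (ProbabilityMeasure Y)
    exact lusin_general μ p hp hβ
  obtain ⟨F, F_closed, hμF, hcont⟩ := lus
  rcases isEmpty_or_nonempty W with hW | hW
  · refine ⟨p, continuous_iff_continuousAt.2 (fun x => (IsEmpty.false x).elim), ?_⟩
    have h0 : {w | p w ≠ p w} = (∅ : Set W) := by ext w; simp
    rw [h0, measure_empty]
    exact ENNReal.ofReal_pos.2 hβ
  · by_cases hne : F.Nonempty
    · obtain ⟨q, hq_cont, hq_eq⟩ := dugundji_probabilityMeasure F F_closed hne p hcont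
      refine ⟨q, hq_cont, ?_⟩
      have hsub : {w | q w ≠ p w} ⊆ Fᶜ := by
        intro w hw
        by_contra h
        rw [Set.notMem_compl_iff] at h
        exact hw (hq_eq w h)
      exact lt_of_le_of_lt (measure_mono hsub) hμF
    · obtain ⟨w₀⟩ := hW
      refine ⟨fun _ => p w₀, continuous_const, ?_⟩
      have hFe : F = ∅ := Set.not_nonempty_iff_eq_empty.1 hne
      have hsub : {w | (fun _ => p w₀) w ≠ p w} ⊆ Fᶜ := by
        intro w _
        rw [hFe]
        simp
      exact lt_of_le_of_lt (measure_mono hsub) hμF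
end

section
/- Consider a two-decision-maker sequential team with cost c(ω₀, u¹, u²), where DM1 observes y¹ and DM2 observes y². Suppose under channels (p¹, p²) the measurements are garblings of the measurements under channels (p̃¹, p̃²): y¹_{p} = g¹(y¹_{p̃}, ν₁) and y²_{p} = g²(y²_{p̃}, ν₂) for measurable g¹, g², with ν₁, ν₂ independent randomization variables. Then the optimal (infimum over measurable, possibly randomized, policy pairs) expected cost under (p¹, p²) is greater than or equal to the optimal expected cost under (p̃¹, p̃²). -/
open MeasureTheory ProbabilityTheory Filter Topology
open scoped NNReal ENNReal

/-- Blackwell garbling for a two-DM sequential team: if each DM's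
measurement under channels `(p¹, p²)` is a garbling `yⁱ = gⁱ(ỹⁱ, νᵢ)` of its measurement
under `(p̃¹, p̃²)` (with independent randomization variables `νᵢ`), then the optimal expected
cost over measurable policies based on the garbled measurements is at least the optimal
expected cost over (possibly randomized) measurable policies based on the original
measurements. -/
theorem garbling_does_not_decrease_cost
    {Ω : Type*} [MeasurableSpace Ω] (P : Measure Ω) [IsProbabilityMeasure P]
    {Ω₀ : Type*} [MeasurableSpace Ω₀]
    {Ytil₁ Ytil₂ N₁ N₂ Y₁ Y₂ : Type*}
    [MeasurableSpace Ytil₁] [MeasurableSpace Ytil₂] [MeasurableSpace N₁]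
    [MeasurableSpace N₂] [MeasurableSpace Y₁] [MeasurableSpace Y₂]
    {U₁ U₂ : Type*} [MeasurableSpace U₁] [MeasurableSpace U₂]
    (ω₀ : Ω → Ω₀) (ytil₁ : Ω → Ytil₁) (ytil₂ : Ω → Ytil₂) (ν₁ : Ω → N₁) (ν₂ : Ω → N₂)
    (hω₀ : Measurable ω₀) (hytil₁ : Measurable ytil₁) (hytil₂ : Measurable ytil₂)
    (hν₁ : Measurable ν₁) (hν₂ : Measurable ν₂)
    -- the randomization variables (ν₁, ν₂) are independent of each other and of (ω₀, ỹ¹, ỹ²)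
    (hindep₁ : IndepFun ν₁ ν₂ P)
    (hindep₂ : IndepFun (fun ω => (ν₁ ω, ν₂ ω)) (fun ω => (ω₀ ω, ytil₁ ω, ytil₂ ω)) P)
    (g₁ : Ytil₁ × N₁ → Y₁) (g₂ : Ytil₂ × N₂ → Y₂)
    (hg₁ : Measurable g₁) (hg₂ : Measurable g₂)
    (c : Ω₀ → U₁ → U₂ → ℝ)
    (hc_meas : Measurable fun q : Ω₀ × U₁ × U₂ => c q.1 q.2.1 q.2.2)
    (M : ℝ) (hc_bdd : ∀ w u₁ u₂, |c w u₁ u₂| ≤ M) :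
    sInf {r : ℝ | ∃ (γ₁ : Y₁ → U₁) (γ₂ : Y₂ → U₂), Measurable γ₁ ∧ Measurable γ₂ ∧
        r = ∫ ω, c (ω₀ ω) (γ₁ (g₁ (ytil₁ ω, ν₁ ω))) (γ₂ (g₂ (ytil₂ ω, ν₂ ω))) ∂P} ≥
    sInf {r : ℝ | ∃ (γ₁ : Ytil₁ × N₁ → U₁) (γ₂ : Ytil₂ × N₂ → U₂),
        Measurable γ₁ ∧ Measurable γ₂ ∧
        r = ∫ ω, c (ω₀ ω) (γ₁ (ytil₁ ω, ν₁ ω)) (γ₂ (ytil₂ ω, ν₂ ω)) ∂P} := by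
  set T := {r : ℝ | ∃ (γ₁ : Y₁ → U₁) (γ₂ : Y₂ → U₂), Measurable γ₁ ∧ Measurable γ₂ ∧
      r = ∫ ω, c (ω₀ ω) (γ₁ (g₁ (ytil₁ ω, ν₁ ω))) (γ₂ (g₂ (ytil₂ ω, ν₂ ω))) ∂P} with hT
  set S := {r : ℝ | ∃ (γ₁ : Ytil₁ × N₁ → U₁) (γ₂ : Ytil₂ × N₂ → U₂),
      Measurable γ₁ ∧ Measurable γ₂ ∧
      r = ∫ ω, c (ω₀ ω) (γ₁ (ytil₁ ω, ν₁ ω)) (γ₂ (ytil₂ ω, ν₂ ω)) ∂P} with hS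
  have hsub : T ⊆ S := by
    rintro r ⟨γ₁, γ₂, hγ₁, hγ₂, rfl⟩
    exact ⟨γ₁ ∘ g₁, γ₂ ∘ g₂, hγ₁.comp hg₁, hγ₂.comp hg₂, rfl⟩
  rcases Set.eq_empty_or_nonempty T with hTe | hTne
  · rw [hTe, Real.sInf_empty]
    rcases Set.eq_empty_or_nonempty S with hSe | ⟨r, γ₁, γ₂, hγ₁, hγ₂, hr⟩
    · rw [hSe, Real.sInf_empty]
    · have hm : Measurable fun ω => c (ω₀ ω) (γ₁ (ytil₁ ω, ν₁ ω)) (γ₂ (ytil₂ ω, ν₂ ω)) :=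
        hc_meas.comp (hω₀.prodMk ((hγ₁.comp (hytil₁.prodMk hν₁)).prodMk
          (hγ₂.comp (hytil₂.prodMk hν₂))))
      exfalso
      apply Set.not_nonempty_empty
      rw [← hTe]
      classical
      obtain ⟨ω⟩ : Nonempty Ω := by
        by_contra h
        rw [not_nonempty_iff] at h
        have : P Set.univ = 1 := measure_univ
        simp [Set.univ_eq_empty_iff.mpr h] at this
      exact ⟨_, fun _ => γ₁ (ytil₁ ω, ν₁ ω), fun _ => γ₂ (ytil₂ ω, ν₂ ω),
        measurable_const, measurable_const, rfl⟩
  · have hbdd : BddBelow S := by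
      refine ⟨-M, ?_⟩
      rintro r ⟨γ₁, γ₂, hγ₁, hγ₂, rfl⟩
      have hm : Measurable fun ω => c (ω₀ ω) (γ₁ (ytil₁ ω, ν₁ ω)) (γ₂ (ytil₂ ω, ν₂ ω)) :=
        hc_meas.comp (hω₀.prodMk ((hγ₁.comp (hytil₁.prodMk hν₁)).prodMk
          (hγ₂.comp (hytil₂.prodMk hν₂))))
      have hnorm : ‖∫ ω, c (ω₀ ω) (γ₁ (ytil₁ ω, ν₁ ω)) (γ₂ (ytil₂ ω, ν₂ ω)) ∂P‖ ≤
          M * (P Set.univ).toReal := by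
        apply norm_integral_le_of_norm_le_const
        filter_upwards with ω
        simpa [Real.norm_eq_abs] using hc_bdd (ω₀ ω) (γ₁ (ytil₁ ω, ν₁ ω)) (γ₂ (ytil₂ ω, ν₂ ω))
      rw [measure_univ] at hnorm
      simp only [ENNReal.toReal_one, mul_one] at hnorm
      have := abs_le.mp (Real.norm_eq_abs _ ▸ hnorm)
      linarith [this.1]
    exact csInf_le_csInf hbdd hTne hsub
end

section
/- Let Ω₀, Y be Polish spaces with Y ⊆ ℝ^k, P a probability measure on Ω₀, p any stochastic kernel from Ω₀ to Y, τ_m the additive Gaussian noise kernel of variance 1/m on ℝ^k, U ⊆ ℝ^n convex, and c : Ω₀ × U → ℝ bounded continuous. Define J*(p) := inf over measurable γ : ℝ^k → U of ∫∫ c(ω₀, γ(y)) P(dω₀) p(dy|ω₀), and J*(pτ_m) := inf over measurable γ : ℝ^k → U of ∫∫∫ c(ω₀, γ(z)) P(dω₀) p(dy|ω₀) τ_m(dz|y). Then lim_{m→∞} J*(pτ_m) = J*(p). -/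
open MeasureTheory ProbabilityTheory Filter Topology
open scoped NNReal ENNReal

/-- The Gaussian measure on `ℝ^k` with mean `y` and covariance `(1/m)·I`. -/
noncomputable def gaussPi (k : ℕ) (m : ℕ) (y : Fin k → ℝ) : Measure (Fin k → ℝ) :=
  Measure.pi fun i => gaussianReal (y i) ((m : ℝ≥0))⁻¹

instance (k m : ℕ) (y : Fin k → ℝ) : IsProbabilityMeasure (gaussPi k m y) := by
  unfold gaussPi; infer_instance

lemma sdm_integrable_of_abs_le {α : Type*} [MeasurableSpace α] {μ : Measure α}
    [IsFiniteMeasure μ] {f : α → ℝ} (hf : AEStronglyMeasurable f μ) {B : ℝ}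
    (hB : ∀ x, |f x| ≤ B) : Integrable f μ :=
  Integrable.mono' (integrable_const B) hf
    (ae_of_all _ fun x => by simpa [Real.norm_eq_abs] using hB x)

lemma sdm_abs_integral_le {α : Type*} [MeasurableSpace α] (μ : Measure α)
    [IsProbabilityMeasure μ] (f : α → ℝ) {B : ℝ} (hB : ∀ x, |f x| ≤ B) :
    |∫ x, f x ∂μ| ≤ B := by
  have := norm_integral_le_of_norm_le_const (μ := μ) (f := f) (C := B)
    (ae_of_all _ fun x => by simpa [Real.norm_eq_abs] using hB x)
  simpa [Real.norm_eq_abs] using this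

lemma sdm_gaussPi_translate (k m : ℕ) (y : Fin k → ℝ) :
    MeasurePreserving (fun w => y + w) (gaussPi k m 0) (gaussPi k m y) := by
  have h : ∀ i : Fin k, MeasurePreserving (fun x => y i + x)
      (gaussianReal ((0 : Fin k → ℝ) i) ((m : ℝ≥0))⁻¹) (gaussianReal (y i) ((m : ℝ≥0))⁻¹) := by
    intro i
    refine ⟨measurable_const_add _, ?_⟩
    rw [show ((0 : Fin k → ℝ) i) = 0 from rfl, gaussianReal_map_const_add, zero_add]
  exact measurePreserving_pi _ _ h

lemma sdm_gaussPi_scale (k m : ℕ) :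
    MeasurePreserving (fun w : Fin k → ℝ => (Real.sqrt m)⁻¹ • w)
      (gaussPi k 1 0) (gaussPi k m 0) := by
  have h : ∀ i : Fin k, MeasurePreserving (fun x => (Real.sqrt m)⁻¹ * x)
      (gaussianReal ((0 : Fin k → ℝ) i) ((1 : ℕ) : ℝ≥0)⁻¹)
      (gaussianReal ((0 : Fin k → ℝ) i) ((m : ℝ≥0))⁻¹) := by
    intro i
    refine ⟨(measurable_id.const_mul _), ?_⟩
    rw [show ((0 : Fin k → ℝ) i) = 0 from rfl]
    have := gaussianReal_map_const_mul (μ := 0) (v := ((1:ℕ) : ℝ≥0)⁻¹) ((Real.sqrt m)⁻¹)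
    rw [this, mul_zero]
    congr 1
    ext
    simp [NNReal.coe_inv, Real.sq_sqrt (Nat.cast_nonneg m)]
  exact measurePreserving_pi _ _ h

lemma sdm_tendsto_integral_gaussPi (k : ℕ) {f : (Fin k → ℝ) → ℝ} (hf : Continuous f)
    {B : ℝ} (hB : ∀ x, |f x| ≤ B) :
    Tendsto (fun m : ℕ => ∫ w, f w ∂(gaussPi k m 0)) atTop (𝓝 (f 0)) := by
  have heq : ∀ m : ℕ, ∫ w, f w ∂(gaussPi k m 0)
      = ∫ w, f ((Real.sqrt m)⁻¹ • w) ∂(gaussPi k 1 0) := by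
    intro m
    rw [← (sdm_gaussPi_scale k m).map_eq,
      integral_map (by fun_prop) hf.aestronglyMeasurable]
  simp_rw [heq]
  have hinv : Tendsto (fun m : ℕ => (Real.sqrt m)⁻¹) atTop (𝓝 0) := by
    have h0 : Tendsto (fun m : ℕ => ((m : ℝ))⁻¹) atTop (𝓝 0) :=
      tendsto_inv_atTop_nhds_zero_nat
    have := (Real.continuous_sqrt.tendsto 0).comp h0
    have h2 : (fun m : ℕ => (Real.sqrt m)⁻¹) = (fun x => Real.sqrt x) ∘ (fun m : ℕ => ((m:ℝ))⁻¹) := by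
      funext m; simp [Function.comp, Real.sqrt_inv]
    rw [h2]
    simpa using this
  have h0 : f 0 = ∫ _w, f 0 ∂(gaussPi k 1 0) := by simp
  rw [h0]
  refine tendsto_integral_of_dominated_convergence (bound := fun _ => B)
    (fun m => (hf.comp (continuous_const_smul _)).aestronglyMeasurable)
    (integrable_const B)
    (fun m => ae_of_all _ fun w => by simpa [Real.norm_eq_abs] using hB _)
    (ae_of_all _ fun w => ?_)
  have : Tendsto (fun m : ℕ => (Real.sqrt m)⁻¹ • w) atTop (𝓝 ((0:ℝ) • w)) :=
    hinv.smul_const w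
  rw [zero_smul] at this
  exact (hf.tendsto 0).comp this

noncomputable def sdmBlend {k n : ℕ} (φ : (Fin n → ℝ) → (Fin k → ℝ) → ℝ) (z : Fin n → ℝ) :
    List (Fin n → ℝ) → (Fin k → ℝ) → (Fin n → ℝ)
  | [] => fun _ => z
  | u :: t => fun y => φ u y • u + (1 - φ u y) • sdmBlend φ z t y

lemma sdmBlend_continuous {k n : ℕ} {φ : (Fin n → ℝ) → (Fin k → ℝ) → ℝ} {z : Fin n → ℝ}
    {l : List (Fin n → ℝ)} (hφ : ∀ u ∈ l, Continuous (φ u)) :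
    Continuous (sdmBlend φ z l) := by
  induction l with
  | nil => exact continuous_const
  | cons a t ih =>
    have ha : Continuous (φ a) := hφ a (List.mem_cons_self)
    exact ((ha.smul continuous_const).add
      ((continuous_const.sub ha).smul (ih fun u hu => hφ u (List.mem_cons_of_mem a hu))))

lemma sdmBlend_mem {k n : ℕ} {φ : (Fin n → ℝ) → (Fin k → ℝ) → ℝ} {z : Fin n → ℝ}
    {U : Set (Fin n → ℝ)} (hU : Convex ℝ U) (hz : z ∈ U)
    {l : List (Fin n → ℝ)} {y : Fin k → ℝ} (hl : ∀ u ∈ l, u ∈ U)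
    (hφ : ∀ u ∈ l, φ u y ∈ Set.Icc (0:ℝ) 1) :
    sdmBlend φ z l y ∈ U := by
  induction l with
  | nil => exact hz
  | cons a t ih =>
    have h01 := hφ a (List.mem_cons_self)
    exact hU (hl a (List.mem_cons_self))
      (ih (fun u hu => hl u (List.mem_cons_of_mem a hu))
        (fun u hu => hφ u (List.mem_cons_of_mem a hu)))
      h01.1 (by linarith [h01.2]) (by ring)

lemma sdmBlend_eq {k n : ℕ} {φ : (Fin n → ℝ) → (Fin k → ℝ) → ℝ} {z : Fin n → ℝ}
    {l : List (Fin n → ℝ)} {y : Fin k → ℝ} {j : Fin n → ℝ} (hj : j ∈ l)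
    (h1 : φ j y = 1) (h0 : ∀ u ∈ l, u ≠ j → φ u y = 0) :
    sdmBlend φ z l y = j := by
  induction l with
  | nil => cases hj
  | cons a t ih =>
    by_cases haj : a = j
    · subst haj
      simp [sdmBlend, h1]
    · have ha0 : φ a y = 0 := h0 a (List.mem_cons_self) haj
      have hjt : j ∈ t := by
        rcases List.mem_cons.mp hj with h | h
        · exact absurd h.symm haj
        · exact h
      simp [sdmBlend, ha0, ih hjt (fun u hu hune => h0 u (List.mem_cons_of_mem a hu) hune)]

lemma sdm_exists_continuous_approx {k n : ℕ} (ρ : Measure (Fin k → ℝ)) [IsFiniteMeasure ρ]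
    {U : Set (Fin n → ℝ)} (hU : Convex ℝ U) {u₀ : Fin n → ℝ} (hu₀ : u₀ ∈ U)
    (s : SimpleFunc (Fin k → ℝ) (Fin n → ℝ)) (hs : ∀ y, s y ∈ U)
    {θ : ℝ≥0∞} (hθ : θ ≠ 0) :
    ∃ g : (Fin k → ℝ) → (Fin n → ℝ), Continuous g ∧ (∀ y, g y ∈ U) ∧
      ∃ E : Set (Fin k → ℝ), MeasurableSet E ∧ ρ E < θ ∧ ∀ y, y ∉ E → g y = s y := by
  classical
  rcases eq_or_ne θ ∞ with hθtop | hθtop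
  · -- trivial: take E = ∅? no, need g = s off E with g continuous: take E = univ!
    refine ⟨fun _ => u₀, continuous_const, fun _ => hu₀, Set.univ, MeasurableSet.univ, ?_, ?_⟩
    · rw [hθtop]; exact measure_lt_top ρ _
    · intro y hy; exact absurd (Set.mem_univ y) hy
  set T := s.range with hT
  set N := T.card with hN
  set η : ℝ≥0∞ := θ / (2 * N + 1) with hη
  have hden_ne_top : (2 * (N:ℝ≥0∞) + 1) ≠ ∞ :=
    ENNReal.add_ne_top.mpr ⟨ENNReal.mul_ne_top ENNReal.ofNat_ne_top (ENNReal.natCast_ne_top N),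
      ENNReal.one_ne_top⟩
  have hden_ne_zero : (2 * (N:ℝ≥0∞) + 1) ≠ 0 := by
    simp
  have hηne : η ≠ 0 := by
    simp only [hη, ne_eq, ENNReal.div_eq_zero_iff, hθ, false_or]
    exact hden_ne_top
  have hηtop : η ≠ ∞ := by
    simp only [hη, ne_eq, ENNReal.div_eq_top, not_or, not_and_or]
    exact ⟨Or.inr hden_ne_zero, Or.inl hθtop⟩
  set A : (Fin n → ℝ) → Set (Fin k → ℝ) := fun u => s ⁻¹' {u} with hA
  have hAdis : ∀ u u' : Fin n → ℝ, u ≠ u' → Disjoint (A u) (A u') := by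
    intro u u' huu'
    rw [Set.disjoint_left]
    intro y hy hy'
    exact huu' (by rw [← hy, ← hy'])
  have hK : ∀ u : Fin n → ℝ, ∃ K : Set (Fin k → ℝ),
      IsCompact K ∧ K ⊆ A u ∧ ρ (A u \ K) < η := by
    intro u
    obtain ⟨K, hKA, hKc, hKd⟩ := (s.measurableSet_fiber u).exists_isCompact_diff_lt (μ := ρ)
      (measure_ne_top _ _) hηne
    exact ⟨K, hKc, hKA, hKd⟩
  choose K hKcomp hKsub hKmeas using hK
  have hV : ∀ u : Fin n → ℝ, ∃ φ : (Fin k → ℝ) → ℝ, ∃ V : Set (Fin k → ℝ),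
      Continuous φ ∧ (∀ y, φ y ∈ Set.Icc (0:ℝ) 1) ∧ (∀ y ∈ K u, φ y = 1) ∧
      IsOpen V ∧ ρ (V \ K u) < η ∧ (∀ y, φ y ≠ 0 → y ∈ V) ∧
      (∀ u', u' ≠ u → Disjoint V (K u')) := by
    intro u
    set C := ⋃ u' ∈ T.erase u, K u' with hC
    have hCcomp : IsCompact C := (T.erase u).finite_toSet.isCompact_biUnion
      (fun u' _ => hKcomp u')
    have hdisj : Disjoint (K u) C := by
      refine Set.disjoint_iUnion₂_right.mpr fun u' hu' => ?_
      exact Set.disjoint_of_subset (hKsub u) (hKsub u')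
        (hAdis u u' (Finset.ne_of_mem_erase hu').symm)
    obtain ⟨O, hKO, hOopen, hOmeas⟩ := Set.exists_isOpen_lt_of_lt (K u) (ρ (K u) + η)
      (ENNReal.lt_add_right (measure_ne_top _ _) hηne)
    set V := O ∩ Cᶜ with hVdef
    have hVopen : IsOpen V := hOopen.inter hCcomp.isClosed.isOpen_compl
    have hKV : K u ⊆ V := Set.subset_inter hKO (Set.subset_compl_iff_disjoint_right.mpr hdisj)
    obtain ⟨f, hf0, hf1, hf01⟩ := exists_continuous_zero_one_of_isCompact'
      (hKcomp u) hVopen.isClosed_compl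
      (Set.disjoint_compl_right_iff_subset.mpr hKV)
    refine ⟨f, V, f.continuous, fun y => hf01 y, fun y hy => hf1 hy, hVopen, ?_, ?_, ?_⟩
    · have h1 : V \ K u ⊆ O \ K u := Set.diff_subset_diff_left Set.inter_subset_left
      exact lt_of_le_of_lt (measure_mono h1)
        (measure_diff_lt_of_lt_add (hKcomp u).isClosed.nullMeasurableSet hKO
          (measure_ne_top _ _) hOmeas)
    · intro y hy
      by_contra hyV
      exact hy (hf0 hyV)
    · intro u' hu'
      by_cases hu'T : u' ∈ T
      · exact disjoint_compl_left.mono Set.inter_subset_right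
          (Set.subset_iUnion₂ (s := fun u'' (_ : u'' ∈ T.erase u) => K u'') u'
            (Finset.mem_erase.mpr ⟨hu', hu'T⟩))
      · have hAe : A u' = ∅ := by
          ext y
          simp only [hA, Set.mem_preimage, Set.mem_singleton_iff, Set.mem_empty_iff_false,
            iff_false]
          intro hy
          exact hu'T (hy ▸ SimpleFunc.mem_range_self s y)
        have : K u' = ∅ := Set.subset_empty_iff.mp ((hKsub u').trans hAe.subset)
        simp [this]
  choose φ V hφcont hφ01 hφK hVopen hVmeas hφsupp hVdisj using hV
  set L := T.toList with hL
  set g := sdmBlend φ u₀ L with hg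
  set E : Set (Fin k → ℝ) := (⋃ u ∈ T, (A u \ K u)) ∪ (⋃ u ∈ T, (V u \ K u)) with hE
  have hLmem : ∀ u ∈ L, u ∈ T := fun u hu => Finset.mem_toList.mp hu
  have hEmeas : MeasurableSet E := by
    refine MeasurableSet.union ?_ ?_
    · exact T.measurableSet_biUnion fun u _ =>
        (s.measurableSet_fiber u).diff (hKcomp u).isClosed.measurableSet
    · exact T.measurableSet_biUnion fun u _ =>
        (hVopen u).measurableSet.diff (hKcomp u).isClosed.measurableSet
  have hEbound : ρ E < θ := by
    have h1 : ρ (⋃ u ∈ T, (A u \ K u)) ≤ (N : ℝ≥0∞) * η := by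
      refine le_trans (measure_biUnion_finset_le T _) ?_
      calc ∑ u ∈ T, ρ (A u \ K u) ≤ ∑ _u ∈ T, η :=
            Finset.sum_le_sum fun u _ => (hKmeas u).le
        _ = (N : ℝ≥0∞) * η := by rw [Finset.sum_const, hN, nsmul_eq_mul]
    have h2 : ρ (⋃ u ∈ T, (V u \ K u)) ≤ (N : ℝ≥0∞) * η := by
      refine le_trans (measure_biUnion_finset_le T _) ?_
      calc ∑ u ∈ T, ρ (V u \ K u) ≤ ∑ _u ∈ T, η :=
            Finset.sum_le_sum fun u _ => (hVmeas u).le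
        _ = (N : ℝ≥0∞) * η := by rw [Finset.sum_const, hN, nsmul_eq_mul]
    have h3 : ρ E ≤ (2 * (N:ℝ≥0∞)) * η := by
      refine le_trans (measure_union_le _ _) ?_
      refine le_trans (add_le_add h1 h2) (le_of_eq ?_)
      ring
    have h5 : (2 * (N:ℝ≥0∞)) * η < (2 * (N:ℝ≥0∞) + 1) * η := by
      refine ENNReal.mul_lt_mul_left hηne hηtop ?_
      exact ENNReal.lt_add_right (ENNReal.mul_ne_top ENNReal.ofNat_ne_top
        (ENNReal.natCast_ne_top N)) one_ne_zero
    have h6 : (2 * (N:ℝ≥0∞) + 1) * η = θ := by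
      rw [hη, ENNReal.mul_div_cancel hden_ne_zero hden_ne_top]
    exact lt_of_le_of_lt h3 (h6 ▸ h5)
  have hgcont : Continuous g := sdmBlend_continuous fun u _ => hφcont u
  have hgmem : ∀ y, g y ∈ U := by
    intro y
    refine sdmBlend_mem hU hu₀ (fun u hu => ?_) (fun u _ => hφ01 u y)
    obtain ⟨x, hx⟩ := SimpleFunc.mem_range.mp (hLmem u hu)
    exact hx ▸ hs x
  refine ⟨g, hgcont, hgmem, E, hEmeas, hEbound, ?_⟩
  intro y hy
  have hy1 : y ∉ ⋃ u ∈ T, (A u \ K u) := fun h => hy (Set.mem_union_left _ h)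
  have hy2 : y ∉ ⋃ u ∈ T, (V u \ K u) := fun h => hy (Set.mem_union_right _ h)
  have hjT : s y ∈ T := SimpleFunc.mem_range_self s y
  have hyA : y ∈ A (s y) := rfl
  have hyK : y ∈ K (s y) := by
    by_contra hk
    exact hy1 (Set.mem_biUnion hjT ⟨hyA, hk⟩)
  have h1 : φ (s y) y = 1 := hφK (s y) y hyK
  have h0 : ∀ u ∈ L, u ≠ s y → φ u y = 0 := by
    intro u huL hune
    by_contra hne0
    have hyV : y ∈ V u := hφsupp u y hne0
    have hyKu : y ∉ K u := by
      intro hk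
      have : s y = u := hKsub u hk
      exact hune this.symm
    exact hy2 (Set.mem_biUnion (hLmem u huL) ⟨hyV, hyKu⟩)
  exact sdmBlend_eq (Finset.mem_toList.mpr hjT) h1 h0

/-- Single-DM version of the main theorem: with `P` a probability measure
on a Polish space `Ω₀`, `p` any stochastic (Markov) kernel from `Ω₀` to `ℝ^k`, `U ⊆ ℝ^n`
convex (and nonempty), and `c` bounded continuous, the optimal cost `J*(pτ_m)` of the
Gaussian-corrupted model converges to the optimal cost `J*(p)` of the original model. -/
theorem single_dm_main_theorem
    {Ω₀ : Type*} [MetricSpace Ω₀] [PolishSpace Ω₀] [MeasurableSpace Ω₀] [BorelSpace Ω₀]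
    (k n : ℕ) (P : Measure Ω₀) [IsProbabilityMeasure P]
    (p : Kernel Ω₀ (Fin k → ℝ)) [IsMarkovKernel p]
    (U : Set (Fin n → ℝ)) (hU_conv : Convex ℝ U) (hU_ne : U.Nonempty)
    (c : Ω₀ × (Fin n → ℝ) → ℝ) (M : ℝ) (hc_cont : Continuous c) (hc_bdd : ∀ q, |c q| ≤ M) :
    Tendsto (fun m : ℕ =>
        sInf {r : ℝ | ∃ γ : (Fin k → ℝ) → (Fin n → ℝ), Measurable γ ∧ (∀ z, γ z ∈ U) ∧
          r = ∫ ω₀, ∫ y, ∫ z, c (ω₀, γ z) ∂(gaussPi k m y) ∂(p ω₀) ∂P})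
      atTop
      (𝓝 (sInf {r : ℝ | ∃ γ : (Fin k → ℝ) → (Fin n → ℝ), Measurable γ ∧ (∀ y, γ y ∈ U) ∧
          r = ∫ ω₀, ∫ y, c (ω₀, γ y) ∂(p ω₀) ∂P})) := by
  classical
  obtain ⟨u₀, hu₀⟩ := hU_ne
  have hΩ : Nonempty Ω₀ := by
    by_contra h
    rw [not_nonempty_iff] at h
    have h1 : P Set.univ = 1 := measure_univ
    rw [Set.univ_eq_empty_iff.mpr h] at h1
    simp at h1
  obtain ⟨ω₀'⟩ := hΩ
  have hM0 : 0 ≤ M := le_trans (abs_nonneg _) (hc_bdd (ω₀', u₀))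
  set μ : Measure (Ω₀ × (Fin k → ℝ)) := P ⊗ₘ p with hμdef
  haveI : IsProbabilityMeasure μ := by rw [hμdef]; infer_instance
  -- measurability helpers
  have hcm : ∀ {γ : (Fin k → ℝ) → (Fin n → ℝ)}, Measurable γ →
      Measurable fun q : Ω₀ × (Fin k → ℝ) => c (q.1, γ q.2) :=
    fun {γ} hγ => hc_cont.measurable.comp (measurable_fst.prodMk (hγ.comp measurable_snd))
  have hFint : ∀ (γ : (Fin k → ℝ) → (Fin n → ℝ)), Measurable γ →
      Integrable (fun q : Ω₀ × (Fin k → ℝ) => c (q.1, γ q.2)) μ :=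
    fun γ hγ => sdm_integrable_of_abs_le (hcm hγ).aestronglyMeasurable (fun q => hc_bdd _)
  have hF_eq : ∀ (γ : (Fin k → ℝ) → (Fin n → ℝ)), Measurable γ →
      (∫ ω₀, ∫ y, c (ω₀, γ y) ∂(p ω₀) ∂P) = ∫ q, c (q.1, γ q.2) ∂μ :=
    fun γ hγ => (Measure.integral_compProd (hFint γ hγ)).symm
  have hinner : ∀ (m : ℕ) (γ : (Fin k → ℝ) → (Fin n → ℝ)), Measurable γ →
      ∀ (ω₀ : Ω₀) (y : Fin k → ℝ),
      ∫ z, c (ω₀, γ z) ∂(gaussPi k m y) = ∫ w, c (ω₀, γ (y + w)) ∂(gaussPi k m 0) := by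
    intro m γ hγ ω₀ y
    rw [← (sdm_gaussPi_translate k m y).map_eq]
    exact integral_map (measurable_const_add y).aemeasurable
      (Measurable.aestronglyMeasurable
        (show Measurable fun z => c (ω₀, γ z) from
          hc_cont.measurable.comp (measurable_const.prodMk hγ)))
  have hprodm : ∀ {γ : (Fin k → ℝ) → (Fin n → ℝ)}, Measurable γ →
      Measurable (fun x : (Ω₀ × (Fin k → ℝ)) × (Fin k → ℝ) => c (x.1.1, γ (x.1.2 + x.2))) :=
    fun {γ} hγ => hc_cont.measurable.comp ((measurable_fst.fst).prodMk
      (hγ.comp ((measurable_fst.snd).add measurable_snd)))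
  have hGm_sm : ∀ (m : ℕ) {γ : (Fin k → ℝ) → (Fin n → ℝ)}, Measurable γ →
      StronglyMeasurable (fun q : Ω₀ × (Fin k → ℝ) =>
        ∫ w, c (q.1, γ (q.2 + w)) ∂(gaussPi k m 0)) :=
    fun m {γ} hγ => (hprodm hγ).stronglyMeasurable.integral_prod_right'
  have hGm_bdd : ∀ (m : ℕ) (γ : (Fin k → ℝ) → (Fin n → ℝ)) (q : Ω₀ × (Fin k → ℝ)),
      |∫ w, c (q.1, γ (q.2 + w)) ∂(gaussPi k m 0)| ≤ M :=
    fun m γ q => sdm_abs_integral_le _ _ (fun w => hc_bdd _)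
  have hGm_int : ∀ (m : ℕ) {γ : (Fin k → ℝ) → (Fin n → ℝ)}, Measurable γ →
      Integrable (fun q : Ω₀ × (Fin k → ℝ) =>
        ∫ w, c (q.1, γ (q.2 + w)) ∂(gaussPi k m 0)) μ :=
    fun m {γ} hγ => sdm_integrable_of_abs_le (hGm_sm m hγ).aestronglyMeasurable (hGm_bdd m γ)
  have hFm_eq : ∀ (m : ℕ) (γ : (Fin k → ℝ) → (Fin n → ℝ)), Measurable γ →
      (∫ ω₀, ∫ y, ∫ z, c (ω₀, γ z) ∂(gaussPi k m y) ∂(p ω₀) ∂P)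
        = ∫ q, ∫ w, c (q.1, γ (q.2 + w)) ∂(gaussPi k m 0) ∂μ := by
    intro m γ hγ
    have h1 : (∫ ω₀, ∫ y, ∫ z, c (ω₀, γ z) ∂(gaussPi k m y) ∂(p ω₀) ∂P)
        = ∫ ω₀, ∫ y, ∫ w, c (ω₀, γ (y + w)) ∂(gaussPi k m 0) ∂(p ω₀) ∂P := by
      refine integral_congr_ae (ae_of_all _ fun ω₀ => ?_)
      refine integral_congr_ae (ae_of_all _ fun y => ?_)
      exact hinner m γ hγ ω₀ y
    rw [h1]
    exact (Measure.integral_compProd (hGm_int m hγ)).symm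
  have hswap : ∀ (m : ℕ) (γ : (Fin k → ℝ) → (Fin n → ℝ)), Measurable γ →
      (∫ q, ∫ w, c (q.1, γ (q.2 + w)) ∂(gaussPi k m 0) ∂μ)
        = ∫ w, ∫ q, c (q.1, γ (q.2 + w)) ∂μ ∂(gaussPi k m 0) := by
    intro m γ hγ
    exact integral_integral_swap
      (sdm_integrable_of_abs_le ((hprodm hγ).aestronglyMeasurable) (fun x => hc_bdd _))
  -- the two optimization value sets
  set SM : ℕ → Set ℝ := fun m =>
    {r : ℝ | ∃ γ : (Fin k → ℝ) → (Fin n → ℝ), Measurable γ ∧ (∀ z, γ z ∈ U) ∧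
      r = ∫ ω₀, ∫ y, ∫ z, c (ω₀, γ z) ∂(gaussPi k m y) ∂(p ω₀) ∂P} with hSMdef
  set S : Set ℝ :=
    {r : ℝ | ∃ γ : (Fin k → ℝ) → (Fin n → ℝ), Measurable γ ∧ (∀ y, γ y ∈ U) ∧
      r = ∫ ω₀, ∫ y, c (ω₀, γ y) ∂(p ω₀) ∂P} with hSdef
  show Tendsto (fun m => sInf (SM m)) atTop (𝓝 (sInf S))
  have hSne : S.Nonempty :=
    ⟨_, ⟨fun _ => u₀, measurable_const, fun _ => hu₀, rfl⟩⟩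
  have hSbdd : BddBelow S := by
    refine ⟨-M, ?_⟩
    rintro r ⟨γ, hγ, hmem, rfl⟩
    rw [hF_eq γ hγ]
    exact (abs_le.mp (sdm_abs_integral_le μ _ (fun q => hc_bdd _))).1
  have hlow : ∀ m, ∀ r ∈ SM m, sInf S ≤ r := by
    rintro m r ⟨γ, hγ, hmem, rfl⟩
    rw [hFm_eq m γ hγ, hswap m γ hγ]
    have hInt : Integrable (fun w => ∫ q, c (q.1, γ (q.2 + w)) ∂μ) (gaussPi k m 0) :=
      sdm_integrable_of_abs_le
        ((hprodm hγ).stronglyMeasurable.integral_prod_left').aestronglyMeasurable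
        (fun w => sdm_abs_integral_le μ _ (fun q => hc_bdd _))
    have hpt : ∀ w, sInf S ≤ ∫ q, c (q.1, γ (q.2 + w)) ∂μ := by
      intro w
      refine csInf_le hSbdd ?_
      exact ⟨fun y => γ (y + w), hγ.comp (measurable_id.add_const w), fun y => hmem _,
        (hF_eq (fun y => γ (y + w)) (hγ.comp (measurable_id.add_const w))).symm⟩
    calc sInf S = ∫ _w, sInf S ∂(gaussPi k m 0) := by simp
      _ ≤ ∫ w, (∫ q, c (q.1, γ (q.2 + w)) ∂μ) ∂(gaussPi k m 0) :=
          integral_mono (integrable_const _) hInt hpt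
  have hSMne : ∀ m, (SM m).Nonempty := fun m =>
    ⟨_, ⟨fun _ => u₀, measurable_const, fun _ => hu₀, rfl⟩⟩
  have hSMbdd : ∀ m, BddBelow (SM m) := fun m => ⟨sInf S, fun r hr => hlow m r hr⟩
  have hlowInf : ∀ m, sInf S ≤ sInf (SM m) := fun m => le_csInf (hSMne m) (hlow m)
  rw [Metric.tendsto_atTop]
  intro ε hε
  obtain ⟨r₁, hr₁S, hr₁lt⟩ := exists_lt_of_csInf_lt hSne
    (show sInf S < sInf S + ε/4 by linarith)
  obtain ⟨γhat, hγhatm, hγhatmem, rfl⟩ := hr₁S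
  rw [hF_eq γhat hγhatm] at hr₁lt
  -- approximate by a simple function with values in U
  have hclos : ∀ x : Fin k → ℝ, γhat x ∈ closure U := fun x => subset_closure (hγhatmem x)
  have htd : Tendsto (fun j => ∫ q, c (q.1, SimpleFunc.approxOn γhat hγhatm U u₀ hu₀ j q.2) ∂μ)
      atTop (𝓝 (∫ q, c (q.1, γhat q.2) ∂μ)) := by
    refine tendsto_integral_of_dominated_convergence (fun _ => M)
      (fun j => (hcm (SimpleFunc.approxOn γhat hγhatm U u₀ hu₀ j).measurable).aestronglyMeasurable)
      (integrable_const M)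
      (fun j => ae_of_all _ fun q => by simpa [Real.norm_eq_abs] using hc_bdd _)
      (ae_of_all _ fun q => ?_)
    have happ : Tendsto (fun j => SimpleFunc.approxOn γhat hγhatm U u₀ hu₀ j q.2)
        atTop (𝓝 (γhat q.2)) :=
      SimpleFunc.tendsto_approxOn hγhatm hu₀ (hclos q.2)
    exact (hc_cont.tendsto _).comp (tendsto_const_nhds.prodMk_nhds happ)
  obtain ⟨j, hj⟩ := (htd.eventually_lt_const hr₁lt).exists
  set sfun := SimpleFunc.approxOn γhat hγhatm U u₀ hu₀ j with hsfun
  have hsmem : ∀ y, sfun y ∈ U := fun y => SimpleFunc.approxOn_mem hγhatm hu₀ j y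
  -- marginal measure and continuous approximation
  set ρ : Measure (Fin k → ℝ) := μ.map Prod.snd with hρdef
  haveI : IsProbabilityMeasure ρ := by
    rw [hρdef]; exact Measure.isProbabilityMeasure_map measurable_snd.aemeasurable
  have hθpos : 0 < ε / (8 * (M + 1)) := div_pos hε (by linarith)
  have hθ0 : ENNReal.ofReal (ε / (8 * (M + 1))) ≠ 0 := by
    simp only [ne_eq, ENNReal.ofReal_eq_zero, not_le]
    exact hθpos
  obtain ⟨g, hgcont, hgmem, E, hEmeas, hEsmall, hgE⟩ :=
    sdm_exists_continuous_approx ρ hU_conv hu₀ sfun hsmem hθ0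
  have hgm : Measurable g := hgcont.measurable
  -- F g is close to F sfun
  have hFg_le : ∫ q, c (q.1, g q.2) ∂μ ≤ (∫ q, c (q.1, sfun q.2) ∂μ) + ε/4 := by
    have hint1 := hFint g hgm
    have hint2 := hFint sfun sfun.measurable
    have hptw : ∀ q : Ω₀ × (Fin k → ℝ), c (q.1, g q.2) - c (q.1, sfun q.2)
        ≤ (Prod.snd ⁻¹' E).indicator (fun _ => 2*M) q := by
      intro q
      by_cases hq : q.2 ∈ E
      · rw [Set.indicator_of_mem (show q ∈ Prod.snd ⁻¹' E from hq)]
        have h1 := abs_le.mp (hc_bdd (q.1, g q.2))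
        have h2 := abs_le.mp (hc_bdd (q.1, sfun q.2))
        linarith [h1.2, h2.1]
      · rw [Set.indicator_of_notMem (show q ∉ Prod.snd ⁻¹' E from hq), hgE q.2 hq]
        simp
    have hIi : Integrable ((Prod.snd ⁻¹' E).indicator (fun _ => (2:ℝ)*M)) μ :=
      (integrable_const ((2:ℝ)*M)).indicator (measurable_snd hEmeas)
    have h2 : ∫ q, (c (q.1, g q.2) - c (q.1, sfun q.2)) ∂μ
        ≤ ∫ q, ((Prod.snd ⁻¹' E).indicator (fun _ => (2:ℝ)*M)) q ∂μ :=
      integral_mono (hint1.sub hint2) hIi hptw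
    rw [integral_sub hint1 hint2] at h2
    have h3 : ∫ q, ((Prod.snd ⁻¹' E).indicator (fun _ => (2:ℝ)*M)) q ∂μ
        = (μ (Prod.snd ⁻¹' E)).toReal • ((2:ℝ)*M) :=
      integral_indicator_const _ (measurable_snd hEmeas)
    have h4 : μ (Prod.snd ⁻¹' E) = ρ E := (Measure.map_apply measurable_snd hEmeas).symm
    have h5 : (ρ E).toReal < ε / (8 * (M + 1)) :=
      (ENNReal.lt_ofReal_iff_toReal_lt (measure_ne_top _ _)).mp hEsmall
    rw [h3, h4] at h2
    have h6 : (ρ E).toReal * (2*M) ≤ (ε / (8 * (M + 1))) * (2*M) := by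
      apply mul_le_mul_of_nonneg_right h5.le
      linarith
    have h7 : (ε / (8 * (M + 1))) * (2*M) ≤ ε/4 := by
      rw [div_mul_eq_mul_div, div_le_iff₀ (by linarith : (0:ℝ) < 8 * (M+1))]
      ring_nf
      nlinarith
    have h8 : (ρ E).toReal • ((2:ℝ)*M) = (ρ E).toReal * (2*M) := rfl
    linarith [h2, h6, h7]
  -- convergence of the noisy cost of g
  have hFmg : Tendsto (fun m => ∫ q, ∫ w, c (q.1, g (q.2 + w)) ∂(gaussPi k m 0) ∂μ)
      atTop (𝓝 (∫ q, c (q.1, g q.2) ∂μ)) := by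
    refine tendsto_integral_of_dominated_convergence (fun _ => M)
      (fun m => (hGm_sm m hgm).aestronglyMeasurable)
      (integrable_const M)
      (fun m => ae_of_all _ fun q => by simpa [Real.norm_eq_abs] using hGm_bdd m g q)
      (ae_of_all _ fun q => ?_)
    have hcont : Continuous fun w : Fin k → ℝ => c (q.1, g (q.2 + w)) :=
      hc_cont.comp (continuous_const.prodMk (hgcont.comp (continuous_const.add continuous_id)))
    have := sdm_tendsto_integral_gaussPi k hcont (fun w => hc_bdd _)
    simpa using this
  have hev : ∀ᶠ m in atTop, (∫ q, ∫ w, c (q.1, g (q.2 + w)) ∂(gaussPi k m 0) ∂μ)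
      < (∫ q, c (q.1, g q.2) ∂μ) + ε/4 :=
    hFmg.eventually_lt_const (by linarith)
  obtain ⟨N, hN⟩ := eventually_atTop.mp hev
  refine ⟨N, fun m hm => ?_⟩
  have hup : sInf (SM m) ≤ ∫ q, ∫ w, c (q.1, g (q.2 + w)) ∂(gaussPi k m 0) ∂μ :=
    csInf_le (hSMbdd m) ⟨g, hgm, fun _ => hgmem _, (hFm_eq m g hgm).symm⟩
  have hlt : sInf (SM m) < sInf S + ε := by
    have := hN m hm
    linarith [hup, hFg_le, hj, hr₁lt]
  have hge := hlowInf m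
  rw [Real.dist_eq, abs_lt]
  constructor <;> linarith
end

section
/- Let S, T be Polish spaces, μ_m → μ weakly on S, and let k_m, k be stochastic kernels from S to T such that whenever s_m → s in S, k_m(·|s_m) → k(·|s) weakly in P(T). Then the product measures μ_m ⊗ k_m (defined by (μ_m ⊗ k_m)(A × B) = ∫_A k_m(B|s) μ_m(ds)) converge weakly to μ ⊗ k on S × T. -/
open MeasureTheory ProbabilityTheory Filter Topology
open scoped NNReal ENNReal

open Set

lemma cc_subseq_s19 {X : Type*} [TopologicalSpace X] {hs : ℕ → X → ℝ} {h : X → ℝ}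
    (hcc : ∀ (u : ℕ → X) (x₀ : X), Tendsto u atTop (𝓝 x₀) →
      Tendsto (fun m => hs m (u m)) atTop (𝓝 (h x₀)))
    {σ : ℕ → ℕ} (hσ : StrictMono σ) {u : ℕ → X} {a : X}
    (hu : Tendsto u atTop (𝓝 a)) :
    Tendsto (fun i => hs (σ i) (u i)) atTop (𝓝 (h a)) := by
  classical
  set v : ℕ → X := fun m => if hm : ∃ i, σ i = m then u hm.choose else a with hv
  have hvσ : ∀ i, v (σ i) = u i := by
    intro i
    have hm : ∃ j, σ j = σ i := ⟨i, rfl⟩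
    simp only [hv, dif_pos hm]
    rw [hσ.injective hm.choose_spec]
  have hva : Tendsto v atTop (𝓝 a) := by
    intro V hV
    rw [mem_map, mem_atTop_sets]
    obtain ⟨N, hN⟩ := mem_atTop_sets.mp (mem_map.mp (hu hV))
    refine ⟨σ N, fun m hm => ?_⟩
    simp only [Set.mem_preimage, hv]
    by_cases hmm : ∃ i, σ i = m
    · rw [dif_pos hmm]
      apply hN
      have : σ N ≤ σ hmm.choose := by rw [hmm.choose_spec]; exact hm
      exact hσ.le_iff_le.mp this
    · rw [dif_neg hmm]; exact mem_of_mem_nhds hV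
  have := (hcc v a hva).comp hσ.tendsto_atTop
  refine this.congr fun i => ?_
  simp [Function.comp, hvσ i]

lemma cc_limit_continuous {X : Type*} [MetricSpace X] {hs : ℕ → X → ℝ} {h : X → ℝ}
    (hcc : ∀ (u : ℕ → X) (x₀ : X), Tendsto u atTop (𝓝 x₀) →
      Tendsto (fun m => hs m (u m)) atTop (𝓝 (h x₀))) :
    Continuous h := by
  apply SeqContinuous.continuous
  intro t a ht
  have H : ∀ n : ℕ, ∃ᶠ m in atTop, |hs m (t n) - h (t n)| < 1 / (n + 1) := by
    intro n
    have h1 : Tendsto (fun m => hs m (t n)) atTop (𝓝 (h (t n))) :=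
      hcc (fun _ => t n) (t n) tendsto_const_nhds
    have hpos : (0:ℝ) < 1 / (n + 1) := by positivity
    have h2 : ∀ᶠ m in atTop, dist (hs m (t n)) (h (t n)) < 1 / (n + 1) :=
      Metric.tendsto_nhds.mp h1 _ hpos
    refine (h2.mono fun m hm => ?_).frequently
    rwa [Real.dist_eq] at hm
  obtain ⟨φ, hφ, hP⟩ := extraction_forall_of_frequently H
  have h1 : Tendsto (fun n => hs (φ n) (t n)) atTop (𝓝 (h a)) := cc_subseq_s19 hcc hφ ht
  have h2 : Tendsto (fun n => hs (φ n) (t n) - h (t n)) atTop (𝓝 0) := by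
    apply squeeze_zero_norm (fun n => (hP n).le)
    exact tendsto_one_div_add_atTop_nhds_zero_nat
  have h3 := h1.sub h2
  simp only [sub_sub_cancel, sub_zero] at h3
  exact h3

lemma exists_compact_tight {X : Type*} [TopologicalSpace X] [PolishSpace X]
    [MeasurableSpace X] [BorelSpace X]
    (ν : Measure X) [IsProbabilityMeasure ν] {ε : ℝ≥0∞} (hε : 0 < ε) :
    ∃ K : Set X, IsCompact K ∧ ν Kᶜ < ε := by
  rcases le_or_gt ε 1 with hε1 | hε1
  swap
  · exact ⟨∅, isCompact_empty, by simpa using hε1⟩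
  letI := TopologicalSpace.upgradeIsCompletelyMetrizable X
  have hXne : Nonempty X := by
    by_contra hX
    rw [not_nonempty_iff] at hX
    have h1 := measure_univ (μ := ν)
    rw [Set.univ_eq_empty_iff.mpr hX, measure_empty] at h1
    simp at h1
  obtain ⟨u, hu⟩ := TopologicalSpace.exists_dense_seq X
  -- the families of finite unions of closed balls
  set A : ℕ → ℕ → Set X := fun n N => ⋃ i ∈ Finset.range (N + 1),
    Metric.closedBall (u i) (1 / (n + 1)) with hA
  have hAclosed : ∀ n N, IsClosed (A n N) := fun n N =>
    (Finset.range (N + 1)).finite_toSet.isClosed_biUnion fun i _ => Metric.isClosed_closedBall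
  have hAmono : ∀ n, Monotone (A n) := by
    intro n N M hNM
    apply Set.iUnion₂_subset
    intro i hi
    exact Set.subset_iUnion₂_of_subset i
      (Finset.mem_range.mpr (lt_of_lt_of_le (Finset.mem_range.mp hi) (by omega))) subset_rfl
  have hAunion : ∀ n, (⋃ N, A n N) = univ := by
    intro n
    apply Set.eq_univ_of_forall
    intro x
    have hpos : (0:ℝ) < 1 / (n + 1) := by positivity
    obtain ⟨i, hi⟩ := Metric.denseRange_iff.mp hu x _ hpos
    exact Set.mem_iUnion.mpr ⟨i, Set.mem_biUnion (Finset.self_mem_range_succ i)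
      (Metric.mem_closedBall.mpr (le_of_lt hi))⟩
  have key : ∀ n : ℕ, ∃ N, ν (A n N)ᶜ < ε / 4 * 2⁻¹ ^ n := by
    intro n
    have htend : Tendsto (fun N => ν (A n N)ᶜ) atTop (𝓝 (ν (⋂ N, (A n N)ᶜ))) := by
      apply tendsto_measure_iInter_atTop
        (fun N => ((hAclosed n N).measurableSet.compl).nullMeasurableSet)
        (fun N M hNM => Set.compl_subset_compl.mpr (hAmono n hNM))
        ⟨0, measure_ne_top ν _⟩
    have hempty : (⋂ N, (A n N)ᶜ) = ∅ := by
      rw [← Set.compl_iUnion, hAunion n, Set.compl_univ]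
    rw [hempty, measure_empty] at htend
    have hδpos : 0 < ε / 4 * 2⁻¹ ^ n := by
      apply ENNReal.mul_pos
      · exact (ENNReal.div_pos hε.ne' (by norm_num)).ne'
      · exact (ENNReal.pow_pos (by norm_num) n).ne'
    have h5 : ∀ᶠ M in atTop, ν (A n M)ᶜ < ε / 4 * 2⁻¹ ^ n :=
      htend.eventually (Filter.Tendsto.eventually_lt_const hδpos tendsto_id)
    exact h5.exists
  choose N hN using key
  refine ⟨⋂ n, A n (N n), ?_, ?_⟩
  · apply TotallyBounded.isCompact_of_isClosed
    · rw [Metric.totallyBounded_iff]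
      intro δ hδ
      obtain ⟨n, hn⟩ := exists_nat_one_div_lt hδ
      refine ⟨u '' (Finset.range (N n + 1) : Set ℕ), (Set.toFinite _).image u, ?_⟩
      intro x hx
      have hx' : x ∈ A n (N n) := Set.mem_iInter.mp hx n
      obtain ⟨i, hi, hxi⟩ := Set.mem_iUnion₂.mp hx'
      refine Set.mem_biUnion (Set.mem_image_of_mem u (by simpa using hi)) ?_
      exact Metric.mem_ball.mpr (lt_of_le_of_lt (Metric.mem_closedBall.mp hxi) hn)
    · exact isClosed_iInter fun n => hAclosed n (N n)
  · rw [Set.compl_iInter]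
    calc ν (⋃ n, (A n (N n))ᶜ) ≤ ∑' n, ν (A n (N n))ᶜ := measure_iUnion_le _
      _ ≤ ∑' n : ℕ, ε / 4 * 2⁻¹ ^ n := ENNReal.tsum_le_tsum fun n => (hN n).le
      _ = ε / 4 * 2 := by
          rw [ENNReal.tsum_mul_left, ENNReal.tsum_geometric]
          norm_num [ENNReal.one_sub_inv_two]
      _ = ε / 2 := by
          rw [div_eq_mul_inv, div_eq_mul_inv, mul_assoc]
          congr 1
          rw [show (4:ℝ≥0∞) = 2 * 2 by norm_num,
            ENNReal.mul_inv (by norm_num) (by norm_num), mul_assoc,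
            ENNReal.inv_mul_cancel (by norm_num) (by norm_num), mul_one]
      _ < ε := ENNReal.half_lt_self hε.ne' (lt_of_le_of_lt hε1 ENNReal.one_lt_top).ne

lemma cc_uniform_thickening {X : Type*} [MetricSpace X] {hs : ℕ → X → ℝ} {h : X → ℝ}
    (hc : Continuous h)
    (hcc : ∀ (u : ℕ → X) (x₀ : X), Tendsto u atTop (𝓝 x₀) →
      Tendsto (fun m => hs m (u m)) atTop (𝓝 (h x₀)))
    {K : Set X} (hK : IsCompact K) {ε : ℝ} (hε : 0 < ε) :
    ∃ δ > 0, ∀ᶠ m in atTop, ∀ x ∈ Metric.thickening δ K, |hs m x - h x| ≤ ε := by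
  by_contra hcon
  push_neg at hcon
  have H : ∀ j : ℕ, ∃ᶠ m in atTop,
      ∃ x ∈ Metric.thickening (1 / (j + 1)) K, ε < |hs m x - h x| := by
    intro j
    have h1 := hcon (1 / (j + 1)) (by positivity)
    exact h1
  obtain ⟨φ, hφ, hP⟩ := extraction_forall_of_frequently H
  choose x hx hεx using hP
  have hk : ∀ j, ∃ k ∈ K, dist (x j) k < 1 / (j + 1) := fun j =>
    Metric.mem_thickening_iff.mp (hx j)
  choose k hkK hdist using hk
  obtain ⟨a, haK, ψ, hψ, hka⟩ := hK.tendsto_subseq hkK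
  have hxa : Tendsto (fun i => x (ψ i)) atTop (𝓝 a) := by
    rw [tendsto_iff_dist_tendsto_zero]
    apply squeeze_zero (fun i => dist_nonneg)
      (g := fun i => 1 / (i + 1) + dist (k (ψ i)) a)
    · intro i
      calc dist (x (ψ i)) a ≤ dist (x (ψ i)) (k (ψ i)) + dist (k (ψ i)) a := dist_triangle _ _ _
        _ ≤ 1 / (i + 1) + dist (k (ψ i)) a := by
            refine add_le_add_left (le_trans (hdist (ψ i)).le ?_) _
            apply one_div_le_one_div_of_le (by positivity)
            have h5 : (i : ℝ) ≤ (ψ i : ℝ) := Nat.cast_le.mpr hψ.le_apply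
            linarith
        
    · have h2 : Tendsto (fun i => dist (k (ψ i)) a) atTop (𝓝 0) :=
        tendsto_iff_dist_tendsto_zero.mp hka
      simpa using tendsto_one_div_add_atTop_nhds_zero_nat.add h2
  have h1 : Tendsto (fun i => hs (φ (ψ i)) (x (ψ i))) atTop (𝓝 (h a)) :=
    cc_subseq_s19 hcc (hφ.comp hψ) hxa
  have h2 : Tendsto (fun i => h (x (ψ i))) atTop (𝓝 (h a)) := (hc.tendsto a).comp hxa
  have h3 : Tendsto (fun i => |hs (φ (ψ i)) (x (ψ i)) - h (x (ψ i))|) atTop (𝓝 0) := by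
    have := h1.sub h2
    simp only [sub_self] at this
    simpa [Real.norm_eq_abs] using this.norm
  have h4 : ∀ᶠ i in atTop, |hs (φ (ψ i)) (x (ψ i)) - h (x (ψ i))| < ε :=
    h3.eventually_lt_const hε
  obtain ⟨i, hi⟩ := h4.exists
  exact absurd (hεx (ψ i)) (not_lt.mpr hi.le)

lemma tendsto_integral_cc {X : Type*} [MetricSpace X] [PolishSpace X] [MeasurableSpace X]
    [BorelSpace X]
    (ν : Measure X) (νs : ℕ → Measure X) [IsProbabilityMeasure ν]
    [∀ m, IsProbabilityMeasure (νs m)]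
    (hν : ∀ f : BoundedContinuousFunction X ℝ,
      Tendsto (fun m => ∫ x, f x ∂(νs m)) atTop (𝓝 (∫ x, f x ∂ν)))
    {hs : ℕ → X → ℝ} {h : X → ℝ} (hc : Continuous h)
    (hms : ∀ m, StronglyMeasurable (hs m)) {M : ℝ} (hM0 : 0 ≤ M)
    (hMh : ∀ x, |h x| ≤ M) (hM : ∀ m x, |hs m x| ≤ M)
    (hcc : ∀ (u : ℕ → X) (x₀ : X), Tendsto u atTop (𝓝 x₀) →
      Tendsto (fun m => hs m (u m)) atTop (𝓝 (h x₀))) :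
    Tendsto (fun m => ∫ x, hs m x ∂(νs m)) atTop (𝓝 (∫ x, h x ∂ν)) := by
  set hb : BoundedContinuousFunction X ℝ :=
    BoundedContinuousFunction.ofNormedAddCommGroup h hc M
      (fun x => by simpa [Real.norm_eq_abs] using hMh x) with hhb
  have htendh : Tendsto (fun m => ∫ x, h x ∂(νs m)) atTop (𝓝 (∫ x, h x ∂ν)) := by
    exact hν hb
  have hint_h : ∀ μ' : Measure X, IsProbabilityMeasure μ' → Integrable h μ' := fun μ' hμ' => by
    haveI := hμ'
    exact hb.integrable μ'
  have hint_hs : ∀ m, Integrable (hs m) (νs m) := fun m =>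
    ⟨(hms m).aestronglyMeasurable, HasFiniteIntegral.of_bounded
      (C := M) (Eventually.of_forall fun x => by simpa [Real.norm_eq_abs] using hM m x)⟩
  let P : ℕ → ProbabilityMeasure X := fun m => ⟨νs m, inferInstance⟩
  let P0 : ProbabilityMeasure X := ⟨ν, inferInstance⟩
  have hPt : Tendsto P atTop (𝓝 P0) :=
    ProbabilityMeasure.tendsto_iff_forall_integral_tendsto.mpr hν
  have key : Tendsto (fun m => ∫ x, hs m x ∂(νs m) - ∫ x, h x ∂(νs m)) atTop (𝓝 0) := by
    rw [NormedAddCommGroup.tendsto_nhds_zero]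
    intro ε hε
    have hε4 : 0 < ε / 4 := by linarith
    have hε'' : (0:ℝ) < ε / (4 * (M + 1)) := by positivity
    obtain ⟨K, hKcomp, hKν⟩ := exists_compact_tight ν
      (ε := ENNReal.ofReal (ε / (4 * (M + 1)))) (ENNReal.ofReal_pos.mpr hε'')
    obtain ⟨δ, hδ, hev⟩ := cc_uniform_thickening hc hcc hKcomp hε4
    set C : Set X := (Metric.thickening δ K)ᶜ with hC
    have hCclosed : IsClosed C := Metric.isOpen_thickening.isClosed_compl
    have hCν : ν C < ENNReal.ofReal (ε / (4 * (M + 1))) :=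
      lt_of_le_of_lt (measure_mono (compl_subset_compl.mpr
        (Metric.self_subset_thickening hδ K))) hKν
    have hlimsup : limsup (fun m => νs m C) atTop ≤ ν C := by
      have := ProbabilityMeasure.limsup_measure_closed_le_of_tendsto hPt hCclosed
      exact this
    have hevC : ∀ᶠ m in atTop, νs m C < ENNReal.ofReal (ε / (4 * (M + 1))) :=
      eventually_lt_of_limsup_lt (lt_of_le_of_lt hlimsup hCν)
    filter_upwards [hev, hevC] with m hm hmC
    rw [← integral_sub (hint_hs m) (hint_h (νs m) inferInstance)]
    have hCmeas : MeasurableSet C := hCclosed.measurableSet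
    calc ‖∫ x, (hs m x - h x) ∂(νs m)‖
        ≤ ∫ x, ‖hs m x - h x‖ ∂(νs m) := norm_integral_le_integral_norm _
      _ ≤ ∫ x, (ε / 4 + (2 * M) * C.indicator (fun _ => (1:ℝ)) x) ∂(νs m) := by
          apply integral_mono ((hint_hs m).sub (hint_h (νs m) inferInstance)).norm
          · exact (integrable_const _).add
              (((integrable_const (1:ℝ)).indicator hCmeas).const_mul _)
          · intro x
            by_cases hx : x ∈ C
            · simp only [indicator_of_mem hx, mul_one]
              calc ‖hs m x - h x‖ ≤ |hs m x| + |h x| := by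
                    rw [Real.norm_eq_abs]; exact abs_sub _ _
                _ ≤ M + M := add_le_add (hM m x) (hMh x)
                _ ≤ ε / 4 + 2 * M := by linarith
            · have hx' : x ∈ Metric.thickening δ K := by
                by_contra hxx
                exact hx hxx
              simp only [indicator_of_notMem hx, mul_zero, add_zero]
              rw [Real.norm_eq_abs]
              exact hm x hx'
      _ = ε / 4 + (2 * M) * (νs m C).toReal := by
          rw [integral_add (integrable_const _)
            (((integrable_const (1:ℝ)).indicator hCmeas).const_mul _),
            integral_const, MeasureTheory.integral_const_mul, integral_indicator_const _ hCmeas]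
          simp [measureReal_def]
      _ < ε := by
          have h1 : (νs m C).toReal ≤ ε / (4 * (M + 1)) :=
            ENNReal.toReal_le_of_le_ofReal hε''.le hmC.le
          have e1 : ε / (4 * (M + 1)) * (4 * (M + 1)) = ε :=
            div_mul_cancel₀ _ (by positivity)
          have h3 : (2 * M) * (νs m C).toReal ≤ (2 * M) * (ε / (4 * (M + 1))) := by
            apply mul_le_mul_of_nonneg_left h1 (by linarith)
          nlinarith [ENNReal.toReal_nonneg (a := νs m C), hε''.le]
  have hfinal := key.add htendh
  rw [zero_add] at hfinal
  refine hfinal.congr fun m => ?_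
  ring

/-- Weak convergence of joint measures: if `μ_m → μ` weakly on a Polish
space `S` and the Markov kernels `k_m` converge continuously to `k` (i.e. `k_m(·|s_m) →
k(·|s)` weakly whenever `s_m → s`), then the product measures `μ_m ⊗ k_m` converge weakly
to `μ ⊗ k` on `S × T`. -/
theorem compProd_weak_convergence
    {S : Type*} [MetricSpace S] [PolishSpace S] [MeasurableSpace S] [BorelSpace S]
    {T : Type*} [MetricSpace T] [PolishSpace T] [MeasurableSpace T] [BorelSpace T]
    (μ : Measure S) (μseq : ℕ → Measure S)
    [IsProbabilityMeasure μ] [∀ m, IsProbabilityMeasure (μseq m)]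
    (hμ_weak : ∀ f : BoundedContinuousFunction S ℝ,
      Tendsto (fun m => ∫ s, f s ∂(μseq m)) atTop (𝓝 (∫ s, f s ∂μ)))
    (κ : Kernel S T) (κseq : ℕ → Kernel S T)
    [IsMarkovKernel κ] [∀ m, IsMarkovKernel (κseq m)]
    (hκ_cc : ∀ (s : ℕ → S) (s₀ : S), Tendsto s atTop (𝓝 s₀) →
      ∀ f : BoundedContinuousFunction T ℝ,
        Tendsto (fun m => ∫ t, f t ∂(κseq m (s m))) atTop (𝓝 (∫ t, f t ∂(κ s₀)))) :
    ∀ g : BoundedContinuousFunction (S × T) ℝ,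
      Tendsto (fun m => ∫ q, g q ∂((μseq m).compProd (κseq m))) atTop
        (𝓝 (∫ q, g q ∂(μ.compProd κ))) := by
  intro g
  set F : S → ℝ := fun s => ∫ t, g (s, t) ∂(κ s) with hF
  set Fm : ℕ → S → ℝ := fun m s => ∫ t, g (s, t) ∂(κseq m s) with hFm
  have hgb : ∀ q : S × T, |g q| ≤ ‖g‖ := fun q => by
    simpa [Real.norm_eq_abs] using g.norm_coe_le_norm q
  -- integral bound for kernel integrals
  have hbound : ∀ (ν' : Measure T), IsProbabilityMeasure ν' → ∀ s : S,
      |∫ t, g (s, t) ∂ν'| ≤ ‖g‖ := by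
    intro ν' hν' s
    haveI := hν'
    rw [← Real.norm_eq_abs]
    calc ‖∫ t, g (s, t) ∂ν'‖ ≤ ‖g‖ * (ν' univ).toReal :=
          norm_integral_le_of_norm_le_const (Eventually.of_forall fun t => by
            simpa [Real.norm_eq_abs] using hgb (s, t))
      _ = ‖g‖ := by simp
  -- continuous convergence of Fm to F
  have hcc2 : ∀ (u : ℕ → S) (s₀ : S), Tendsto u atTop (𝓝 s₀) →
      Tendsto (fun m => Fm m (u m)) atTop (𝓝 (F s₀)) := by
    intro u s₀ hu
    apply tendsto_integral_cc (κ s₀) (fun m => κseq m (u m)) (hκ_cc u s₀ hu)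
      (hs := fun m t => g (u m, t)) (h := fun t => g (s₀, t)) (M := ‖g‖)
    · exact g.continuous.comp (Continuous.prodMk_right s₀)
    · exact fun m => (g.continuous.comp (Continuous.prodMk_right (u m))).stronglyMeasurable
    · exact norm_nonneg g
    · exact fun t => hgb (s₀, t)
    · exact fun m t => hgb (u m, t)
    · intro v t₀ hv
      exact (g.continuous.tendsto (s₀, t₀)).comp (hu.prodMk_nhds hv)
  have hFcont : Continuous F := cc_limit_continuous hcc2
  have hFmmeas : ∀ m, StronglyMeasurable (Fm m) := fun m =>
    StronglyMeasurable.integral_kernel_prod_right' (κ := κseq m)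
      g.continuous.stronglyMeasurable
  have hmain : Tendsto (fun m => ∫ s, Fm m s ∂(μseq m)) atTop (𝓝 (∫ s, F s ∂μ)) := by
    apply tendsto_integral_cc μ μseq hμ_weak hFcont hFmmeas (norm_nonneg g)
      (fun s => hbound (κ s) inferInstance s)
      (fun m s => hbound (κseq m s) inferInstance s) hcc2
  have hre : ∀ m, ∫ q, g q ∂((μseq m).compProd (κseq m)) = ∫ s, Fm m s ∂(μseq m) := by
    intro m
    exact Measure.integral_compProd (g.integrable _)
  have hre0 : ∫ q, g q ∂(μ.compProd κ) = ∫ s, F s ∂μ :=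
    Measure.integral_compProd (g.integrable _)
  rw [hre0]
  refine hmain.congr fun m => (hre m).symm
end
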